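/- arXiv:1908.05954 — 3 statements merged into one kernel-verified Lean document; each statement's English description precedes it below -/
import Mathlib

section
/- Every Sturmian sequence is recurrent: each factor of a Sturmian sequence occurs at infinitely many positions in the sequence. -/
/-- The word `v` occurs in the sequence `w` at position `k`. -/
def occursAt (w : ℕ → Fin 2) (v : List (Fin 2)) (k : ℕ) : Prop :=
  ∀ i < v.length, v.getD i 0 = w (k + i)

/-- Subword complexity of a sequence over `{1,2}`. -/
noncomputable def complexityFn (w : ℕ → Fin 2) (n : ℕ) : ℕ :=
  Set.ncard {v : Fin n → Fin 2 | ∃ k : ℕ, ∀ i : Fin n, v i = w (k + i)}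

/-- A Sturmian sequence: complexity `n + 1` for all `n`. -/
def IsSturmian (w : ℕ → Fin 2) : Prop := ∀ n, complexityFn w n = n + 1

namespace SturmianRec

/-- The set of length-`n` factors of `w`. -/
def Facts (w : ℕ → Fin 2) (n : ℕ) : Set (Fin n → Fin 2) :=
  {v | ∃ k : ℕ, ∀ i : Fin n, v i = w (k + i)}

lemma complexity_eq (w : ℕ → Fin 2) (n : ℕ) : complexityFn w n = (Facts w n).ncard := rfl

lemma facts_eq_image (w : ℕ → Fin 2) (n : ℕ) :
    Facts w n = (fun v : Fin (n+1) → Fin 2 => v ∘ Fin.castSucc) '' Facts w (n+1) := by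
  ext u
  constructor
  · rintro ⟨k, hk⟩
    refine ⟨fun i => w (k + i), ⟨k, fun i => rfl⟩, ?_⟩
    funext i
    simp only [Function.comp_apply, Fin.coe_castSucc]
    exact (hk i).symm
  · rintro ⟨u', ⟨k, hk⟩, rfl⟩
    refine ⟨k, fun i => ?_⟩
    simp only [Function.comp_apply, hk, Fin.coe_castSucc]

lemma facts_mono (w : ℕ → Fin 2) (n : ℕ) : (Facts w n).ncard ≤ (Facts w (n+1)).ncard := by
  rw [facts_eq_image]
  exact Set.ncard_image_le (Set.toFinite _)

lemma facts_mono_le (w : ℕ → Fin 2) {a b : ℕ} (h : a ≤ b) :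
    (Facts w a).ncard ≤ (Facts w b).ncard := by
  induction b with
  | zero => rw [Nat.le_zero.mp h]
  | succ b ih =>
    rcases Nat.lt_or_ge a (b+1) with h' | h'
    · exact le_trans (ih (Nat.lt_succ_iff.mp h')) (facts_mono w b)
    · have he : a = b + 1 := le_antisymm h h'
      rw [he]

/-- `w` has deterministic continuation after matching `n` letters. -/
def Det (w : ℕ → Fin 2) (n : ℕ) : Prop :=
  ∀ k k' : ℕ, (∀ i < n, w (k + i) = w (k' + i)) → w (k + n) = w (k' + n)

lemma det_of_card (w : ℕ → Fin 2) (n : ℕ)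
    (h : (Facts w (n+1)).ncard ≤ (Facts w n).ncard) : Det w n := by
  have heq : ((fun v : Fin (n+1) → Fin 2 => v ∘ Fin.castSucc) '' Facts w (n+1)).ncard
      = (Facts w (n+1)).ncard := by
    rw [← facts_eq_image]
    exact le_antisymm (facts_mono w n) h
  have hinj := Set.injOn_of_ncard_image_eq heq (Set.toFinite _)
  intro k k' hkk'
  have h1 : (fun i : Fin (n+1) => w (k + i)) ∈ Facts w (n+1) := ⟨k, fun i => rfl⟩
  have h2 : (fun i : Fin (n+1) => w (k' + i)) ∈ Facts w (n+1) := ⟨k', fun i => rfl⟩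
  have hpre : (fun i : Fin (n+1) => w (k + i)) ∘ Fin.castSucc
      = (fun i : Fin (n+1) => w (k' + i)) ∘ Fin.castSucc := by
    funext i
    simp only [Function.comp_apply, Fin.coe_castSucc]
    exact hkk' i i.isLt
  have := hinj h1 h2 hpre
  have := congrFun this (Fin.last n)
  simpa using this

lemma det_mono (w : ℕ → Fin 2) {n m : ℕ} (h : Det w n) (hnm : n ≤ m) : Det w m := by
  intro k k' hkk'
  have := h (k + (m - n)) (k' + (m - n)) (fun i hi => by
    have h1 : k + (m - n) + i = k + (m - n + i) := by omega
    have h2 : k' + (m - n) + i = k' + (m - n + i) := by omega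
    rw [h1, h2]
    exact hkk' _ (by omega))
  have h1 : k + (m - n) + n = k + m := by omega
  have h2 : k' + (m - n) + n = k' + m := by omega
  rwa [h1, h2] at this

lemma card_stable (w : ℕ → Fin 2) (m : ℕ) (h : Det w m) :
    (Facts w (m+1)).ncard ≤ (Facts w m).ncard := by
  have hinj : Set.InjOn (fun v : Fin (m+1) → Fin 2 => v ∘ Fin.castSucc) (Facts w (m+1)) := by
    rintro u ⟨k, hk⟩ u' ⟨k', hk'⟩ hpre
    have hagree : ∀ i < m, w (k + i) = w (k' + i) := by
      intro i hi
      have := congrFun hpre ⟨i, hi⟩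
      simp only [Function.comp_apply] at this
      have hc : (Fin.castSucc (⟨i, hi⟩ : Fin m)) = (⟨i, by omega⟩ : Fin (m+1)) := rfl
      rw [hc] at this
      rw [hk ⟨i, by omega⟩, hk' ⟨i, by omega⟩] at this
      exact this
    have hlast := h k k' hagree
    funext i
    rw [hk i, hk' i]
    rcases Nat.lt_or_ge i.val m with hi | hi
    · exact hagree i hi
    · have : (i : ℕ) = m := by omega
      rw [this]
      exact hlast
  have heq : (Facts w (m+1)).ncard = (Facts w m).ncard := by
    rw [facts_eq_image w m]
    exact (Set.ncard_image_of_injOn hinj).symm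
  exact heq.le

lemma bounded_of_det (w : ℕ → Fin 2) (n : ℕ) (h : Det w n) :
    ∀ m, (Facts w m).ncard ≤ (Facts w n).ncard := by
  have key : ∀ j, (Facts w (n + j)).ncard ≤ (Facts w n).ncard := by
    intro j
    induction j with
    | zero => rfl
    | succ j ih =>
      have := card_stable w (n + j) (det_mono w h (Nat.le_add_right n j))
      calc (Facts w (n + (j+1))).ncard = (Facts w (n + j + 1)).ncard := rfl
        _ ≤ (Facts w (n + j)).ncard := this
        _ ≤ _ := ih
  intro m
  rcases Nat.lt_or_ge m n with hm | hm
  · exact facts_mono_le w hm.le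
  · have := key (m - n)
    have he : n + (m - n) = m := by omega
    rwa [he] at this

theorem main (w : ℕ → Fin 2) (hw : IsSturmian w) (v : List (Fin 2))
    (hv : ∃ k, occursAt w v k) : ∀ N : ℕ, ∃ k ≥ N, occursAt w v k := by
  by_contra hcon
  push_neg at hcon
  obtain ⟨N, hN⟩ := hcon
  obtain ⟨k0, hk0⟩ := hv
  set n := v.length with hn
  set w' : ℕ → Fin 2 := fun i => w (N + i) with hw'
  set φ : Fin n → Fin 2 := fun i => v.getD i 0 with hφ
  -- φ is a factor of w
  have hφmem : φ ∈ Facts w n := ⟨k0, fun i => hk0 i i.isLt⟩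
  -- factors of w' of length n avoid φ
  have hsub : Facts w' n ⊆ Facts w n \ {φ} := by
    rintro u ⟨k, hk⟩
    constructor
    · exact ⟨N + k, fun i => by rw [hk i]; simp [hw', Nat.add_assoc]⟩
    · intro hu
      simp only [Set.mem_singleton_iff] at hu
      apply hN (N + k) (Nat.le_add_right N k)
      intro i hi
      have hti : φ ⟨i, hi⟩ = w' (k + i) := by rw [← hu]; exact hk ⟨i, hi⟩
      have h5 : w (N + k + i) = w' (k + i) := by simp [hw', Nat.add_assoc]
      rw [h5]
      exact hti
  have hcard' : (Facts w' n).ncard ≤ n := by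
    have h1 : (Facts w' n).ncard ≤ (Facts w n \ {φ}).ncard :=
      Set.ncard_le_ncard hsub (Set.Finite.diff (Set.toFinite _))
    have h2 : (Facts w n \ {φ}).ncard = (Facts w n).ncard - 1 :=
      Set.ncard_diff_singleton_of_mem hφmem
    have h3 : (Facts w n).ncard = n + 1 := hw n
    omega
  -- the complexity of w' is somewhere non-increasing
  have hzero : 1 ≤ (Facts w' 0).ncard := by
    have : (fun i : Fin 0 => w' i) ∈ Facts w' 0 := ⟨0, fun i => by simp⟩
    exact (Set.ncard_pos (Set.toFinite _)).mpr ⟨_, this⟩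
  have hstep : ∃ j, (Facts w' (j+1)).ncard ≤ (Facts w' j).ncard := by
    by_contra hsi
    push_neg at hsi
    have grow : ∀ j, j + 1 ≤ (Facts w' j).ncard := by
      intro j
      induction j with
      | zero => simpa using hzero
      | succ j ih => have := hsi j; omega
    have := grow n
    omega
  obtain ⟨j, hj⟩ := hstep
  have hdet := det_of_card w' j hj
  set C := (Facts w' j).ncard with hC
  have hbdd := bounded_of_det w' j hdet
  -- factors of w of any length are bounded by N + C
  have hbw : ∀ m, (Facts w m).ncard ≤ N + C := by
    intro m
    have hsub2 : Facts w m ⊆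
        ((fun k : ℕ => fun i : Fin m => w (k + i)) '' Set.Iio N) ∪ Facts w' m := by
      rintro u ⟨k, hk⟩
      rcases Nat.lt_or_ge k N with hk' | hk'
      · left
        exact ⟨k, hk', by funext i; exact (hk i).symm⟩
      · right
        refine ⟨k - N, fun i => ?_⟩
        rw [hk i]
        simp only [hw']
        congr 1
        omega
    calc (Facts w m).ncard
        ≤ (((fun k : ℕ => fun i : Fin m => w (k + i)) '' Set.Iio N) ∪ Facts w' m).ncard :=
          Set.ncard_le_ncard hsub2 (Set.Finite.union
            (Set.Finite.image _ (Set.finite_Iio N)) (Set.toFinite _))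
      _ ≤ ((fun k : ℕ => fun i : Fin m => w (k + i)) '' Set.Iio N).ncard
            + (Facts w' m).ncard := Set.ncard_union_le _ _
      _ ≤ N + C := by
          gcongr
          · calc ((fun k : ℕ => fun i : Fin m => w (k + i)) '' Set.Iio N).ncard
                ≤ (Set.Iio N).ncard := Set.ncard_image_le (Set.finite_Iio N)
              _ = N := by
                  rw [← Finset.coe_Iio, Set.ncard_coe_finset, Nat.card_Iio]
          · exact hbdd m
    -- contradiction with unbounded complexity of w
  have := hbw (N + C)
  have h4 : (Facts w (N + C)).ncard = N + C + 1 := hw (N + C)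
  omega

end SturmianRec

/-- Every Sturmian sequence is recurrent: each factor occurs at infinitely many positions. -/
theorem stmt1 (w : ℕ → Fin 2) (hw : IsSturmian w) (v : List (Fin 2))
    (hv : ∃ k, occursAt w v k) : ∀ N : ℕ, ∃ k ≥ N, occursAt w v k :=
  SturmianRec.main w hw v hv
end

section
/- Let w be a Sturmian sequence with an S-adic coding sequence (σ_{i_n}) of Sturmian substitutions whose sequence of incidence matrices (M_{i_n}) has a generalized right eigenvector u ∈ ℝ²_{>0}. Then w has uniform letter frequencies, and the frequency vector equals u/‖u‖₁, i.e., for each letter a ∈ {1,2}, the ratio |w_k⋯w_{k+ℓ−1}|_a/ℓ converges to u_a/‖u‖₁ as ℓ → ∞, uniformly in k. -/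
/-- The Sturmian substitutions: `σ₁ : 1 ↦ 1, 2 ↦ 21` and `σ₂ : 1 ↦ 12, 2 ↦ 2`
(letters `1, 2` are `0, 1 : Fin 2`). -/
def sturmSub (j : Fin 2) (a : Fin 2) : List (Fin 2) :=
  if j = 0 then (if a = 0 then [0] else [1, 0]) else (if a = 0 then [0, 1] else [1])

/-- The incidence matrices `M₁ = [[1,1],[0,1]]`, `M₂ = [[1,0],[1,1]]`. -/
noncomputable def sturmMat (j : Fin 2) : Matrix (Fin 2) (Fin 2) ℝ :=
  if j = 0 then !![1, 1; 0, 1] else !![1, 0; 1, 1]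

/-- `σ_{i_0} ∘ ⋯ ∘ σ_{i_{n-1}}` applied to the letter `a`. -/
def sturmWord (i : ℕ → Fin 2) : ℕ → Fin 2 → List (Fin 2)
  | 0, a => [a]
  | n + 1, a => (sturmSub (i n) a).flatMap (sturmWord i n)

/-! ### Auxiliary lemmas -/

lemma count01 (l : List (Fin 2)) : l.count 0 + l.count 1 = l.length := by
  induction l with
  | nil => simp
  | cons c t ih =>
    have : c = 0 ∨ c = 1 := by omega
    rcases this with rfl | rfl <;> simp [List.count_cons] <;> omega

lemma sturmWord_ne_nil (i : ℕ → Fin 2) (n : ℕ) (a : Fin 2) : sturmWord i n a ≠ [] := by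
  induction n generalizing a with
  | zero => simp [sturmWord]
  | succ n ih =>
    have : a = 0 ∨ a = 1 := by omega
    have h2 : i n = 0 ∨ i n = 1 := by omega
    rcases this with rfl | rfl <;> rcases h2 with h2 | h2 <;>
      simp [sturmWord, sturmSub, h2, ih]

lemma sturmWord_head_prefix (i : ℕ → Fin 2) (n : ℕ) (a : Fin 2) :
    sturmWord i n a <+: sturmWord i (n + 1) a := by
  have h2 : i n = 0 ∨ i n = 1 := by omega
  have ha : a = 0 ∨ a = 1 := by omega
  rcases ha with rfl | rfl <;> rcases h2 with h2 | h2 <;>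
    simp [sturmWord, sturmSub, h2, List.prefix_append]

lemma sturmWord_prefix_le (i : ℕ → Fin 2) {m n : ℕ} (h : m ≤ n) (a : Fin 2) :
    sturmWord i m a <+: sturmWord i n a := by
  induction n with
  | zero => interval_cases m; exact List.prefix_rfl
  | succ n ih =>
    rcases Nat.lt_or_ge m (n+1) with h' | h'
    · exact (ih (by omega)).trans (sturmWord_head_prefix i n a)
    · have : m = n + 1 := by omega
      subst this; exact List.prefix_rfl

lemma sturmWord_decomp (i : ℕ → Fin 2) (m : ℕ) :
    ∀ d a, sturmWord i (m + d) a = (sturmWord (fun k => i (k + m)) d a).flatMap (sturmWord i m)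
  | 0, a => by simp [sturmWord]
  | d + 1, a => by
    show (sturmSub (i (m + d)) a).flatMap (sturmWord i (m + d)) = _
    simp only [sturmWord]
    rw [List.flatMap_assoc]
    have he : i (m + d) = i (d + m) := by ring_nf
    rw [he]
    congr 1
    funext c; exact sturmWord_decomp i m d c

/-! ### The discrepancy function -/

noncomputable def gfun (a : Fin 2) (ρ : ℝ) (l : List (Fin 2)) : ℝ :=
  (l.count a : ℝ) - ρ * l.length

lemma gfun_append (a : Fin 2) (ρ : ℝ) (l₁ l₂ : List (Fin 2)) :
    gfun a ρ (l₁ ++ l₂) = gfun a ρ l₁ + gfun a ρ l₂ := by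
  simp [gfun]; ring

lemma abs_gfun_le (a : Fin 2) (ρ : ℝ) (hρ0 : 0 ≤ ρ) (hρ1 : ρ ≤ 1) (l : List (Fin 2)) :
    |gfun a ρ l| ≤ l.length := by
  have h1 : (l.count a : ℝ) ≤ l.length := by exact_mod_cast (List.count_le_length : l.count a ≤ l.length)
  have h2 : (0:ℝ) ≤ l.count a := by positivity
  have h4 : ρ * l.length ≤ l.length := by nlinarith [Nat.cast_nonneg (α := ℝ) l.length]
  rw [abs_le]; constructor <;> simp [gfun] <;> nlinarith [Nat.cast_nonneg (α := ℝ) l.length]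

lemma gen_prefix (a : Fin 2) (ρ : ℝ) (f : Fin 2 → List (Fin 2)) (ε B : ℝ)
    (hρ0 : 0 ≤ ρ) (hρ1 : ρ ≤ 1) (hε : 0 ≤ ε) (hB : 0 ≤ B)
    (hf : ∀ c, |gfun a ρ (f c)| ≤ ε * (f c).length)
    (hfB : ∀ c, ((f c).length : ℝ) ≤ B) :
    ∀ (cs : List (Fin 2)) (q : List (Fin 2)), q <+: cs.flatMap f →
      |gfun a ρ q| ≤ ε * q.length + B := by
  intro cs
  induction cs with
  | nil =>
    intro q hq
    simp at hq; subst hq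
    simpa [gfun] using by positivity
  | cons c cs ih =>
    intro q hq
    simp only [List.flatMap_cons] at hq
    rcases le_or_gt q.length (f c).length with hlen | hlen
    · have hqfc : q <+: f c := List.prefix_of_prefix_length_le hq (List.prefix_append _ _) hlen
      have := abs_gfun_le a ρ hρ0 hρ1 q
      have : |gfun a ρ q| ≤ B := le_trans this (le_trans (by exact_mod_cast Nat.cast_le.mpr (List.IsPrefix.length_le hqfc)) (hfB c))
      nlinarith [mul_nonneg hε (Nat.cast_nonneg (α := ℝ) q.length)]
    · have hfcq : f c <+: q :=
        List.prefix_of_prefix_length_le (List.prefix_append _ _) hq hlen.le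
      obtain ⟨q', rfl⟩ := hfcq
      have hq' : q' <+: cs.flatMap f := by
        obtain ⟨t, ht⟩ := hq
        rw [List.append_assoc] at ht
        exact ⟨t, (List.append_cancel_left ht)⟩
      have h1 := ih q' hq'
      have h2 := hf c
      rw [gfun_append]
      calc |gfun a ρ (f c) + gfun a ρ q'| ≤ |gfun a ρ (f c)| + |gfun a ρ q'| := abs_add_le _ _
        _ ≤ ε * (f c).length + (ε * q'.length + B) := by linarith
        _ = ε * ((f c).length + q'.length) + B := by ring
        _ = ε * ((f c ++ q').length) + B := by rw [List.length_append]; push_cast; ring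

lemma gen_infix (a : Fin 2) (ρ : ℝ) (f : Fin 2 → List (Fin 2)) (ε B : ℝ)
    (hρ0 : 0 ≤ ρ) (hρ1 : ρ ≤ 1) (hε : 0 ≤ ε) (hB : 0 ≤ B)
    (hf : ∀ c, |gfun a ρ (f c)| ≤ ε * (f c).length)
    (hfB : ∀ c, ((f c).length : ℝ) ≤ B) :
    ∀ (cs : List (Fin 2)) (v : List (Fin 2)), v <:+: cs.flatMap f →
      |gfun a ρ v| ≤ ε * v.length + 2 * B := by
  intro cs
  induction cs with
  | nil =>
    intro v hv
    simp at hv; subst hv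
    simpa [gfun] using by positivity
  | cons c cs ih =>
    intro v hv
    simp only [List.flatMap_cons] at hv
    obtain ⟨x, y, hxy⟩ := hv
    rcases le_or_gt (f c).length x.length with hlen | hlen
    · have hxp : x <+: f c ++ cs.flatMap f := ⟨v ++ y, by rw [← List.append_assoc, hxy]⟩
      have hx : f c <+: x := List.prefix_of_prefix_length_le (List.prefix_append _ _) hxp hlen
      obtain ⟨x', rfl⟩ := hx
      apply ih
      refine ⟨x', y, ?_⟩
      have := hxy
      rw [List.append_assoc, List.append_assoc] at this
      have := List.append_cancel_left this
      simpa using this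
    · rcases le_or_gt v.length ((f c).length - x.length) with hsv | hsv
      · have h1 := abs_gfun_le a ρ hρ0 hρ1 v
        have h2 : (v.length : ℝ) ≤ B := by
          have : (v.length : ℕ) ≤ (f c).length := by omega
          calc (v.length : ℝ) ≤ ((f c).length : ℝ) := by exact_mod_cast this
            _ ≤ B := hfB c
        nlinarith [mul_nonneg hε (Nat.cast_nonneg (α := ℝ) v.length)]
      · set s := (f c).length - x.length with hs
        have hlen2 : x.length + s = (f c).length := by omega
        have hsle : s ≤ v.length := hsv.le
        have hv2 : v.drop s <+: cs.flatMap f := by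
          refine ⟨y, ?_⟩
          have h := congrArg (List.drop (f c).length) hxy
          rw [List.drop_left] at h
          rw [← hlen2, List.append_assoc, List.drop_length_add_append,
            List.drop_append_of_le_length hsle] at h
          exact h
        have hgv : gfun a ρ v = gfun a ρ (v.take s) + gfun a ρ (v.drop s) := by
          rw [← gfun_append, List.take_append_drop]
        rw [hgv]
        have h2 : |gfun a ρ (v.take s)| ≤ B := by
          have := abs_gfun_le a ρ hρ0 hρ1 (v.take s)
          refine this.trans ?_
          have hsl : ((v.take s).length : ℝ) ≤ ((f c).length:ℝ) := by
            simp only [List.length_take]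
            have : min s v.length ≤ (f c).length := by omega
            exact_mod_cast this
          exact hsl.trans (hfB c)
        have h3 := gen_prefix a ρ f ε B hρ0 hρ1 hε hB hf hfB cs (v.drop s) hv2
        have h4 : ((v.drop s).length : ℝ) ≤ v.length := by
          simp only [List.length_drop]; exact_mod_cast Nat.sub_le _ _
        calc |gfun a ρ (v.take s) + gfun a ρ (v.drop s)|
            ≤ |gfun a ρ (v.take s)| + |gfun a ρ (v.drop s)| := abs_add_le _ _
          _ ≤ B + (ε * (v.drop s).length + B) := by linarith
          _ ≤ ε * v.length + 2 * B := by nlinarith [mul_le_mul_of_nonneg_left h4 hε]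

/-! ### Matrices -/

noncomputable def Vmat (i : ℕ → Fin 2) (n : ℕ) : Matrix (Fin 2) (Fin 2) ℝ :=
  ((List.range n).map fun k => sturmMat (i k)).prod

lemma Vmat_succ (i : ℕ → Fin 2) (n : ℕ) :
    Vmat i (n + 1) = Vmat i n * sturmMat (i n) := by
  unfold Vmat
  rw [List.range_succ, List.map_append, List.prod_append]
  simp

lemma count_sturmWord (i : ℕ → Fin 2) (n : ℕ) (a b : Fin 2) :
    ((sturmWord i n a).count b : ℝ) = Vmat i n b a := by
  induction n generalizing a b with
  | zero =>
    have : Vmat i 0 = 1 := by simp [Vmat]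
    rw [this]
    have ha : a = 0 ∨ a = 1 := by omega
    have hb : b = 0 ∨ b = 1 := by omega
    rcases ha with rfl | rfl <;> rcases hb with rfl | rfl <;>
      simp [sturmWord, Matrix.one_apply, List.count_singleton]
  | succ n ih =>
    rw [Vmat_succ, Matrix.mul_apply, Fin.sum_univ_two, ← ih 0 b, ← ih 1 b]
    have hin : i n = 0 ∨ i n = 1 := by omega
    have ha : a = 0 ∨ a = 1 := by omega
    rcases ha with rfl | rfl <;> rcases hin with h | h <;>
      simp [sturmWord, sturmSub, sturmMat, h, List.count_append] <;> push_cast <;> ring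

lemma mulVec_two (V : Matrix (Fin 2) (Fin 2) ℝ) (y : Fin 2 → ℝ) (b : Fin 2) :
    V.mulVec y b = V b 0 * y 0 + V b 1 * y 1 := by
  simp [Matrix.mulVec, dotProduct, Fin.sum_univ_two]

lemma sturmMat_nonneg (j : Fin 2) (b c : Fin 2) : 0 ≤ sturmMat j b c := by
  have : j = 0 ∨ j = 1 := by omega
  rcases this with rfl | rfl <;> fin_cases b <;> fin_cases c <;>
    norm_num [sturmMat]

/-! ### Convexity lemmas -/

lemma conv2 (v0 v1 : Fin 2 → ℝ)
    (hL0 : 0 < v0 0 + v0 1) (hL1 : 0 < v1 0 + v1 1) (s : ℝ)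
    (hs0 : v0 0 / (v0 0 + v0 1) ≤ s) (hs1 : s ≤ v1 0 / (v1 0 + v1 1)) :
    ∃ y0 y1 : ℝ, 0 ≤ y0 ∧ 0 ≤ y1 ∧ y0 * v0 0 + y1 * v1 0 = s ∧
      y0 * v0 1 + y1 * v1 1 = 1 - s := by
  set L0 := v0 0 + v0 1 with hL0d
  set L1 := v1 0 + v1 1 with hL1d
  set t0 := v0 0 / L0 with ht0
  set t1 := v1 0 / L1 with ht1
  have hL0n : L0 ≠ 0 := ne_of_gt hL0
  have hL1n : L1 ≠ 0 := ne_of_gt hL1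
  have hv00 : v0 0 = t0 * L0 := by rw [ht0]; field_simp
  have hv10 : v1 0 = t1 * L1 := by rw [ht1]; field_simp
  have hv01 : v0 1 = (1 - t0) * L0 := by
    rw [sub_mul, one_mul, ← hv00, hL0d]; ring
  have hv11 : v1 1 = (1 - t1) * L1 := by
    rw [sub_mul, one_mul, ← hv10, hL1d]; ring
  clear_value t0 t1 L0 L1
  rcases eq_or_lt_of_le (hs0.trans hs1) with heq | hlt
  · have hst : s = t0 := by linarith
    refine ⟨1 / L0, 0, by positivity, le_refl _, ?_, ?_⟩
    · rw [hv00, hst]; field_simp; ring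
    · rw [hv01, hst]; field_simp; ring
  · set lam := (t1 - s) / (t1 - t0) with hlam
    have hne : t1 - t0 ≠ 0 := ne_of_gt (by linarith)
    have hlam0 : 0 ≤ lam := by apply div_nonneg <;> linarith
    have hlam1 : lam ≤ 1 := by
      rw [hlam, div_le_one (by linarith)]; linarith
    clear_value lam
    refine ⟨lam / L0, (1 - lam) / L1, div_nonneg hlam0 hL0.le,
      div_nonneg (by linarith) hL1.le, ?_, ?_⟩
    · rw [hv00, hv10, hlam]; field_simp; ring
    · rw [hv01, hv11, hlam]; field_simp; ring

lemma mem_bounds (v0 v1 x : Fin 2 → ℝ) (y0 y1 : ℝ)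
    (hx0 : x 0 = y0 * v0 0 + y1 * v1 0) (hx1 : x 1 = y0 * v0 1 + y1 * v1 1)
    (hy0 : 0 ≤ y0) (hy1 : 0 ≤ y1)
    (hL0 : 0 < v0 0 + v0 1) (hL1 : 0 < v1 0 + v1 1)
    (hxs : 0 < x 0 + x 1) :
    min (v0 0 / (v0 0 + v0 1)) (v1 0 / (v1 0 + v1 1)) ≤ x 0 / (x 0 + x 1) ∧
      x 0 / (x 0 + x 1) ≤ max (v0 0 / (v0 0 + v0 1)) (v1 0 / (v1 0 + v1 1)) := by
  set t0 := v0 0 / (v0 0 + v0 1) with ht0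
  set t1 := v1 0 / (v1 0 + v1 1) with ht1
  have e0 : v0 0 = t0 * (v0 0 + v0 1) := by rw [ht0]; field_simp
  have e1 : v1 0 = t1 * (v1 0 + v1 1) := by rw [ht1]; field_simp
  constructor
  · rw [le_div_iff₀ hxs]
    have m0 : min t0 t1 * (v0 0 + v0 1) ≤ v0 0 := by
      have := mul_le_mul_of_nonneg_right (min_le_left t0 t1) hL0.le
      linarith
    have m1 : min t0 t1 * (v1 0 + v1 1) ≤ v1 0 := by
      have := mul_le_mul_of_nonneg_right (min_le_right t0 t1) hL1.le
      linarith
    have key : min t0 t1 * (x 0 + x 1) =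
        y0 * (min t0 t1 * (v0 0 + v0 1)) + y1 * (min t0 t1 * (v1 0 + v1 1)) := by
      rw [hx0, hx1]; ring
    linarith [mul_le_mul_of_nonneg_left m0 hy0, mul_le_mul_of_nonneg_left m1 hy1]
  · rw [div_le_iff₀ hxs]
    have m0 : v0 0 ≤ max t0 t1 * (v0 0 + v0 1) := by
      have := mul_le_mul_of_nonneg_right (le_max_left t0 t1) hL0.le
      linarith
    have m1 : v1 0 ≤ max t0 t1 * (v1 0 + v1 1) := by
      have := mul_le_mul_of_nonneg_right (le_max_right t0 t1) hL1.le
      linarith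
    have key : max t0 t1 * (x 0 + x 1) =
        y0 * (max t0 t1 * (v0 0 + v0 1)) + y1 * (max t0 t1 * (v1 0 + v1 1)) := by
      rw [hx0, hx1]; ring
    linarith [mul_le_mul_of_nonneg_left m0 hy0, mul_le_mul_of_nonneg_left m1 hy1]

/-! ### The cones -/

noncomputable def coneC (i : ℕ → Fin 2) (n : ℕ) : Set (Fin 2 → ℝ) :=
  (fun x => (Vmat i (n + 1)).mulVec x) '' {x : Fin 2 → ℝ | ∀ j, 0 ≤ x j}

noncomputable def tauf (i : ℕ → Fin 2) (n : ℕ) (c : Fin 2) : ℝ :=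
  Vmat i (n + 1) 0 c / (Vmat i (n + 1) 0 c + Vmat i (n + 1) 1 c)

noncomputable def alphaf (i : ℕ → Fin 2) (n : ℕ) : ℝ := min (tauf i n 0) (tauf i n 1)
noncomputable def betaf (i : ℕ → Fin 2) (n : ℕ) : ℝ := max (tauf i n 0) (tauf i n 1)

lemma Vmat_nonneg (i : ℕ → Fin 2) (n : ℕ) (b c : Fin 2) : 0 ≤ Vmat i n b c := by
  rw [← count_sturmWord]; positivity

lemma Vmat_colsum (i : ℕ → Fin 2) (n : ℕ) (c : Fin 2) :
    Vmat i n 0 c + Vmat i n 1 c = ((sturmWord i n c).length : ℝ) := by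
  rw [← count_sturmWord, ← count_sturmWord, ← Nat.cast_add, count01]

lemma Vmat_colsum_pos (i : ℕ → Fin 2) (n : ℕ) (c : Fin 2) :
    0 < Vmat i n 0 c + Vmat i n 1 c := by
  rw [Vmat_colsum]
  have := List.length_pos_iff.mpr (sturmWord_ne_nil i n c)
  exact_mod_cast this

lemma cone_bounds (i : ℕ → Fin 2) (n : ℕ) (x : Fin 2 → ℝ) (hx : x ∈ coneC i n)
    (hxs : 0 < x 0 + x 1) :
    alphaf i n ≤ x 0 / (x 0 + x 1) ∧ x 0 / (x 0 + x 1) ≤ betaf i n := by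
  obtain ⟨y, hy, rfl⟩ := hx
  exact mem_bounds (fun b => Vmat i (n+1) b 0) (fun b => Vmat i (n+1) b 1) _ (y 0) (y 1)
    (by rw [mulVec_two]; ring) (by rw [mulVec_two]; ring) (hy 0) (hy 1)
    (Vmat_colsum_pos i (n+1) 0) (Vmat_colsum_pos i (n+1) 1) hxs

lemma col_mem_cone (i : ℕ → Fin 2) (n : ℕ) (c : Fin 2) :
    (fun b => Vmat i (n + 1) b c) ∈ coneC i n := by
  have hc : c = 0 ∨ c = 1 := by omega
  rcases hc with rfl | rfl
  · exact ⟨![1, 0], by intro j; fin_cases j <;> norm_num,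
      funext fun b => by
        show (Vmat i (n + 1)).mulVec ![1, 0] b = Vmat i (n + 1) b 0
        rw [mulVec_two]; norm_num⟩
  · exact ⟨![0, 1], by intro j; fin_cases j <;> norm_num,
      funext fun b => by
        show (Vmat i (n + 1)).mulVec ![0, 1] b = Vmat i (n + 1) b 1
        rw [mulVec_two]; norm_num⟩

lemma cone_antitone (i : ℕ → Fin 2) (n : ℕ) : coneC i (n + 1) ⊆ coneC i n := by
  rintro x ⟨y, hy, rfl⟩
  refine ⟨(sturmMat (i (n+1))).mulVec y, ?_, ?_⟩
  · intro j
    rw [mulVec_two]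
    have h0 := sturmMat_nonneg (i (n+1)) j 0
    have h1 := sturmMat_nonneg (i (n+1)) j 1
    nlinarith [hy 0, hy 1]
  · show (Vmat i (n+1)).mulVec _ = (Vmat i (n+1+1)).mulVec y
    rw [Matrix.mulVec_mulVec, ← Vmat_succ]

lemma cone_conv (i : ℕ → Fin 2) (n : ℕ) (s : ℝ) (h1 : alphaf i n ≤ s) (h2 : s ≤ betaf i n) :
    ![s, 1 - s] ∈ coneC i n := by
  rcases le_total (tauf i n 0) (tauf i n 1) with h | h
  · have hα : alphaf i n = tauf i n 0 := min_eq_left h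
    have hβ : betaf i n = tauf i n 1 := max_eq_right h
    obtain ⟨y0, y1, hy0, hy1, he0, he1⟩ := conv2 (fun b => Vmat i (n+1) b 0)
      (fun b => Vmat i (n+1) b 1) (Vmat_colsum_pos i (n+1) 0) (Vmat_colsum_pos i (n+1) 1)
      s (by rw [hα] at h1; exact h1) (by rw [hβ] at h2; exact h2)
    refine ⟨![y0, y1], by intro j; fin_cases j <;> simpa, funext fun b => ?_⟩
    have hb : b = 0 ∨ b = 1 := by omega
    rcases hb with rfl | rfl
    · show (Vmat i (n + 1)).mulVec ![y0, y1] 0 = ![s, 1 - s] 0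
      rw [mulVec_two]
      simp only [Matrix.cons_val_zero, Matrix.cons_val_one, Matrix.head_cons]
      linarith [he0]
    · show (Vmat i (n + 1)).mulVec ![y0, y1] 1 = ![s, 1 - s] 1
      rw [mulVec_two]
      simp only [Matrix.cons_val_zero, Matrix.cons_val_one, Matrix.head_cons]
      linarith [he1]
  · have hα : alphaf i n = tauf i n 1 := min_eq_right h
    have hβ : betaf i n = tauf i n 0 := max_eq_left h
    obtain ⟨y0, y1, hy0, hy1, he0, he1⟩ := conv2 (fun b => Vmat i (n+1) b 1)
      (fun b => Vmat i (n+1) b 0) (Vmat_colsum_pos i (n+1) 1) (Vmat_colsum_pos i (n+1) 0)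
      s (by rw [hα] at h1; exact h1) (by rw [hβ] at h2; exact h2)
    refine ⟨![y1, y0], by intro j; fin_cases j <;> simpa, funext fun b => ?_⟩
    have hb : b = 0 ∨ b = 1 := by omega
    rcases hb with rfl | rfl
    · show (Vmat i (n + 1)).mulVec ![y1, y0] 0 = ![s, 1 - s] 0
      rw [mulVec_two]
      simp only [Matrix.cons_val_zero, Matrix.cons_val_one, Matrix.head_cons]
      linarith [he0]
    · show (Vmat i (n + 1)).mulVec ![y1, y0] 1 = ![s, 1 - s] 1
      rw [mulVec_two]
      simp only [Matrix.cons_val_zero, Matrix.cons_val_one, Matrix.head_cons]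
      linarith [he1]

lemma tau_in (i : ℕ → Fin 2) (n : ℕ) (c : Fin 2) :
    alphaf i n ≤ tauf i n c ∧ tauf i n c ≤ betaf i n := by
  have hc : c = 0 ∨ c = 1 := by omega
  rcases hc with rfl | rfl
  · exact ⟨min_le_left _ _, le_max_left _ _⟩
  · exact ⟨min_le_right _ _, le_max_right _ _⟩

lemma alpha_mono (i : ℕ → Fin 2) : Monotone (alphaf i) := by
  apply monotone_nat_of_le_succ
  intro n
  have key : ∀ c, alphaf i n ≤ tauf i (n+1) c ∧ tauf i (n+1) c ≤ betaf i n := by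
    intro c
    have hmem : (fun b => Vmat i (n + 2) b c) ∈ coneC i n :=
      cone_antitone i n (col_mem_cone i (n+1) c)
    exact cone_bounds i n _ hmem (Vmat_colsum_pos i (n+2) c)
  exact le_min (key 0).1 (key 1).1

lemma beta_anti (i : ℕ → Fin 2) : Antitone (betaf i) := by
  apply antitone_nat_of_succ_le
  intro n
  have key : ∀ c, alphaf i n ≤ tauf i (n+1) c ∧ tauf i (n+1) c ≤ betaf i n := by
    intro c
    have hmem : (fun b => Vmat i (n + 2) b c) ∈ coneC i n :=
      cone_antitone i n (col_mem_cone i (n+1) c)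
    exact cone_bounds i n _ hmem (Vmat_colsum_pos i (n+2) c)
  exact max_le (key 0).2 (key 1).2

/-! ### Convergence of column ratios -/

lemma tau_conv (i : ℕ → Fin 2) (u : Fin 2 → ℝ) (hupos : ∀ j, 0 < u j)
    (heig : (⋂ n : ℕ,
        (fun x => (((List.range (n + 1)).map fun k => sturmMat (i k)).prod).mulVec x) ''
          {x : Fin 2 → ℝ | ∀ j, 0 ≤ x j})
      = {x : Fin 2 → ℝ | ∃ t : ℝ, 0 ≤ t ∧ x = t • u}) :
    ∀ ε : ℝ, 0 < ε → ∃ m, ∀ c, |tauf i m c - u 0 / (u 0 + u 1)| ≤ ε := by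
  intro ε hε
  have hS : 0 < u 0 + u 1 := by have := hupos 0; have := hupos 1; linarith
  have heig' : (⋂ n, coneC i n) = {x : Fin 2 → ℝ | ∃ t : ℝ, 0 ≤ t ∧ x = t • u} := heig
  have hu : ∀ n, u ∈ coneC i n := by
    intro n
    have hmem : u ∈ {x : Fin 2 → ℝ | ∃ t : ℝ, 0 ≤ t ∧ x = t • u} :=
      ⟨1, zero_le_one, (one_smul ℝ u).symm⟩
    rw [← heig'] at hmem
    exact Set.mem_iInter.mp hmem n
  have hab : ∀ n, alphaf i n ≤ u 0 / (u 0 + u 1) ∧ u 0 / (u 0 + u 1) ≤ betaf i n :=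
    fun n => cone_bounds i n u (hu n) hS
  -- the sup of α equals p
  have hbddA : BddAbove (Set.range (alphaf i)) :=
    ⟨u 0 / (u 0 + u 1), by rintro _ ⟨n, rfl⟩; exact (hab n).1⟩
  have hbddB : BddBelow (Set.range (betaf i)) :=
    ⟨u 0 / (u 0 + u 1), by rintro _ ⟨n, rfl⟩; exact (hab n).2⟩
  have ray_val : ∀ s : ℝ, (∀ n, ![s, 1 - s] ∈ coneC i n) → s = u 0 / (u 0 + u 1) := by
    intro s hmem
    have hx : ![s, 1 - s] ∈ {x : Fin 2 → ℝ | ∃ t : ℝ, 0 ≤ t ∧ x = t • u} := by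
      rw [← heig']
      exact Set.mem_iInter.mpr hmem
    obtain ⟨t, ht0, htA⟩ := hx
    have h0 : s = t * u 0 := by simpa using congrFun htA 0
    have h1 : 1 - s = t * u 1 := by simpa using congrFun htA 1
    have htS : t * (u 0 + u 1) = 1 := by
      have : t * u 0 + t * u 1 = t * (u 0 + u 1) := by ring
      linarith
    rw [eq_div_iff (ne_of_gt hS)]
    linear_combination (u 0 + u 1) * h0 + u 0 * htS
  have hAp : (⨆ n, alphaf i n) = u 0 / (u 0 + u 1) := by
    apply ray_val
    intro n
    exact cone_conv i n _ (le_ciSup hbddA n)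
      ((ciSup_le fun m => (hab m).1).trans (hab n).2)
  have hBp : (⨅ n, betaf i n) = u 0 / (u 0 + u 1) := by
    apply ray_val
    intro n
    exact cone_conv i n _ ((hab n).1.trans (le_ciInf fun m => (hab m).2))
      (ciInf_le hbddB n)
  -- extract an index
  have hm1 : ∃ m1, u 0 / (u 0 + u 1) - ε < alphaf i m1 := by
    by_contra h
    push_neg at h
    have : (⨆ n, alphaf i n) ≤ u 0 / (u 0 + u 1) - ε := ciSup_le h
    rw [hAp] at this
    linarith
  have hm2 : ∃ m2, betaf i m2 < u 0 / (u 0 + u 1) + ε := by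
    by_contra h
    push_neg at h
    have : u 0 / (u 0 + u 1) + ε ≤ ⨅ n, betaf i n := le_ciInf h
    rw [hBp] at this
    linarith
  obtain ⟨m1, h1⟩ := hm1
  obtain ⟨m2, h2⟩ := hm2
  refine ⟨max m1 m2, fun c => ?_⟩
  have ha := alpha_mono i (le_max_left m1 m2)
  have hb := beta_anti i (le_max_right m1 m2)
  have hin := tau_in i (max m1 m2) c
  have hp := hab (max m1 m2)
  rw [abs_le]
  constructor <;> linarith [hin.1, hin.2]

/-- Letter-count bound on the level-`m` building blocks. -/
lemma freq_bound (i : ℕ → Fin 2) (u : Fin 2 → ℝ) (hupos : ∀ j, 0 < u j)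
    (heig : (⋂ n : ℕ,
        (fun x => (((List.range (n + 1)).map fun k => sturmMat (i k)).prod).mulVec x) ''
          {x : Fin 2 → ℝ | ∀ j, 0 ≤ x j})
      = {x : Fin 2 → ℝ | ∃ t : ℝ, 0 ≤ t ∧ x = t • u}) :
    ∀ ε : ℝ, 0 < ε → ∃ m, ∀ c b : Fin 2,
      |((sturmWord i m c).count b : ℝ) - u b / (u 0 + u 1) * (sturmWord i m c).length| ≤
        ε * (sturmWord i m c).length := by
  intro ε hε
  have hS : 0 < u 0 + u 1 := by have := hupos 0; have := hupos 1; linarith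
  obtain ⟨m, hm⟩ := tau_conv i u hupos heig ε hε
  refine ⟨m + 1, fun c b => ?_⟩
  have hlen : Vmat i (m+1) 0 c + Vmat i (m+1) 1 c = ((sturmWord i (m+1) c).length : ℝ) :=
    Vmat_colsum i (m+1) c
  have hlenpos : (0:ℝ) < (sturmWord i (m+1) c).length := by
    rw [← hlen]; exact Vmat_colsum_pos i (m+1) c
  have hc0 : ((sturmWord i (m+1) c).count 0 : ℝ) = Vmat i (m+1) 0 c := count_sturmWord i (m+1) c 0
  have hc1 : ((sturmWord i (m+1) c).count 1 : ℝ) = Vmat i (m+1) 1 c := count_sturmWord i (m+1) c 1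
  have htau : tauf i m c = Vmat i (m+1) 0 c / ((sturmWord i (m+1) c).length : ℝ) := by
    rw [tauf, hlen]
  have hkey0 : |((sturmWord i (m+1) c).count 0 : ℝ)
      - u 0 / (u 0 + u 1) * (sturmWord i (m+1) c).length| ≤ ε * (sturmWord i (m+1) c).length := by
    have h := hm c
    have heq : ((sturmWord i (m+1) c).count 0 : ℝ)
        - u 0 / (u 0 + u 1) * (sturmWord i (m+1) c).length
        = (tauf i m c - u 0 / (u 0 + u 1)) * (sturmWord i (m+1) c).length := by
      rw [htau, hc0]; field_simp
    rw [heq, abs_mul, abs_of_pos hlenpos]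
    exact mul_le_mul_of_nonneg_right h hlenpos.le
  have hb : b = 0 ∨ b = 1 := by omega
  rcases hb with rfl | rfl
  · exact hkey0
  · have hflip : ((sturmWord i (m+1) c).count 1 : ℝ)
        - u 1 / (u 0 + u 1) * (sturmWord i (m+1) c).length
        = -(((sturmWord i (m+1) c).count 0 : ℝ)
          - u 0 / (u 0 + u 1) * (sturmWord i (m+1) c).length) := by
      have hsum : ((sturmWord i (m+1) c).count 0 : ℝ) + ((sturmWord i (m+1) c).count 1 : ℝ)
          = ((sturmWord i (m+1) c).length : ℝ) := by
        rw [← Nat.cast_add, count01]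
      have hq : u 0 / (u 0 + u 1) + u 1 / (u 0 + u 1) = 1 := by
        field_simp
      nlinarith [hsum, hq]
    rw [hflip, abs_neg]
    exact hkey0

/-! ### Counting occurrences in a window -/

lemma card_filter_eq_count (w : ℕ → Fin 2) (a : Fin 2) (k : ℕ) : ∀ ℓ,
    ((Finset.range ℓ).filter fun j => w (k + j) = a).card
      = ((List.range ℓ).map fun j => w (k + j)).count a := by
  intro ℓ
  induction ℓ with
  | zero => simp
  | succ n ih =>
    rw [Finset.range_add_one, List.range_succ, Finset.filter_insert, List.map_append,
      List.count_append]
    by_cases h : w (k + n) = a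
    · rw [if_pos h, Finset.card_insert_of_notMem (by simp)]
      simp [h, ih, List.count_cons]
    · rw [if_neg h]
      simp only [List.map_cons, List.map_nil, ih]
      simp [List.count_cons, h]

lemma ncard_eq_count (w : ℕ → Fin 2) (a : Fin 2) (k ℓ : ℕ) :
    Set.ncard {j : ℕ | j < ℓ ∧ w (k + j) = a}
      = ((List.range ℓ).map fun j => w (k + j)).count a := by
  have hset : {j : ℕ | j < ℓ ∧ w (k + j) = a}
      = ↑((Finset.range ℓ).filter fun j => w (k + j) = a) := by
    ext j
    simp [Finset.mem_filter, Finset.mem_range]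
  rw [hset, Set.ncard_coe_finset, card_filter_eq_count]

/-- A Sturmian sequence with a coding sequence of Sturmian substitutions whose
incidence matrices have a generalized right eigenvector `u` has uniform letter
frequencies given by `u / ‖u‖₁`. -/
theorem stmt5 (w : ℕ → Fin 2) (i : ℕ → Fin 2) (u : Fin 2 → ℝ)
    (hw : IsSturmian w)
    -- `(σ_{i_n})` is a coding sequence for `w` : `w` has the same language as the
    -- limit sequences `lim_n σ_{i_0} ∘ ⋯ ∘ σ_{i_{n-1}}(a)`
    (hlang : ∀ v : List (Fin 2),
      (∃ k, occursAt w v k) ↔ ∃ n a, v <:+: sturmWord i n a)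
    (hupos : ∀ j, 0 < u j)
    -- `u` is a generalized right eigenvector of `(M_{i_n})`
    (heig : (⋂ n : ℕ,
        (fun x => (((List.range (n + 1)).map fun k => sturmMat (i k)).prod).mulVec x) ''
          {x : Fin 2 → ℝ | ∀ j, 0 ≤ x j})
      = {x : Fin 2 → ℝ | ∃ t : ℝ, 0 ≤ t ∧ x = t • u}) :
    ∀ a : Fin 2, ∀ ε > (0 : ℝ), ∃ L : ℕ, ∀ ℓ ≥ L, ∀ k : ℕ,
      |(Set.ncard {j : ℕ | j < ℓ ∧ w (k + j) = a} : ℝ) / ℓ - u a / (u 0 + u 1)| < ε := by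
  intro a ε hε
  have hS : 0 < u 0 + u 1 := by have := hupos 0; have := hupos 1; linarith
  set ρ := u a / (u 0 + u 1) with hρ
  have hρ0 : 0 ≤ ρ := le_of_lt (div_pos (hupos a) hS)
  have hρ1 : ρ ≤ 1 := by
    rw [hρ, div_le_one hS]
    have ha : a = 0 ∨ a = 1 := by omega
    rcases ha with rfl | rfl
    · linarith [hupos 1]
    · linarith [hupos 0]
  obtain ⟨m, hm⟩ := freq_bound i u hupos heig (ε/4) (by linarith)
  set f : Fin 2 → List (Fin 2) := fun c => sturmWord i m c with hf
  set B : ℝ := max ((f 0).length : ℝ) ((f 1).length : ℝ) with hB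
  have hB0 : (0:ℝ) ≤ B := le_trans (Nat.cast_nonneg _) (le_max_left _ _)
  have hfB : ∀ c, ((f c).length : ℝ) ≤ B := by
    intro c
    have : c = 0 ∨ c = 1 := by omega
    rcases this with rfl | rfl
    · exact le_max_left _ _
    · exact le_max_right _ _
  have hfg : ∀ c, |gfun a ρ (f c)| ≤ (ε/4) * (f c).length := by
    intro c
    have := hm c a
    simpa [gfun, hρ, hf] using this
  refine ⟨⌈8 * B / ε⌉₊ + 1, fun ℓ hℓ k => ?_⟩
  have hℓ1 : 1 ≤ ℓ := le_trans (Nat.le_add_left 1 _) hℓ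
  have hℓpos : (0:ℝ) < ℓ := by exact_mod_cast hℓ1
  have hℓB : 8 * B ≤ ε * ℓ := by
    have h1 : (8 * B / ε) ≤ (⌈8 * B / ε⌉₊ : ℝ) := Nat.le_ceil _
    have h2 : ((⌈8 * B / ε⌉₊ + 1 : ℕ) : ℝ) ≤ ℓ := by exact_mod_cast hℓ
    push_cast at h2
    rw [div_le_iff₀ hε] at h1
    nlinarith
  set v : List (Fin 2) := (List.range ℓ).map fun j => w (k + j) with hv
  have hvlen : v.length = ℓ := by simp [hv]
  have hocc : ∃ k', occursAt w v k' := by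
    refine ⟨k, fun idx hidx => ?_⟩
    rw [List.getD_eq_getElem v 0 hidx]
    simp [hv]
  obtain ⟨n, a', hinf⟩ := (hlang v).mp hocc
  have hinf2 : v <:+: sturmWord i (max n m) a' :=
    hinf.trans (sturmWord_prefix_le i (le_max_left n m) a').isInfix
  obtain ⟨cs, hdec⟩ : ∃ cs : List (Fin 2), sturmWord i (max n m) a' = cs.flatMap f := by
    obtain ⟨d, hd⟩ : ∃ d, max n m = m + d := ⟨max n m - m, by omega⟩
    exact ⟨sturmWord (fun k => i (k + m)) d a', by rw [hd]; exact sturmWord_decomp i m d a'⟩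
  rw [hdec] at hinf2
  have hg := gen_infix a ρ f (ε/4) B hρ0 hρ1 (by linarith) hB0 hfg hfB cs v hinf2
  have hcount : (Set.ncard {j : ℕ | j < ℓ ∧ w (k + j) = a} : ℝ) = (v.count a : ℝ) := by
    rw [ncard_eq_count]
  rw [hcount]
  have hsplit : (v.count a : ℝ) / ℓ - ρ = gfun a ρ v / ℓ := by
    rw [gfun, hvlen]; field_simp
  rw [hsplit, abs_div, abs_of_pos hℓpos, div_lt_iff₀ hℓpos]
  rw [hvlen] at hg
  have hεℓ : 0 < ε * ℓ := mul_pos hε hℓpos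
  linarith
end

section
/- Let σ be a primitive and recurrent sequence of unimodular substitutions over an alphabet A with generalized right eigenvector u. Then the Rauzy fractal R_w and each of its subtiles R_w(i) is compact for every w ∈ ℝ^d_{≥0}\{0} if and only if the language L_σ is finitely balanced. -/
/-- The image of an infinite sequence under a (nonerasing) substitution. -/
def subApplyG {d : ℕ} (s : Fin d → List (Fin d)) (u : ℕ → Fin d) (n : ℕ) : Fin d :=
  (((List.range (n + 1)).map u).flatMap s).getD n (u 0)

/-- `w` is a limit sequence for the directive sequence `s`. -/
def IsLimitSeq {d : ℕ} (s : ℕ → Fin d → List (Fin d)) (w : ℕ → Fin d) : Prop :=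
  ∃ ws : ℕ → ℕ → Fin d, ws 0 = w ∧ ∀ n, ws n = subApplyG (s n) (ws (n + 1))

/-- The incidence matrix (over `ℤ`) of the `n`-th substitution. -/
def incZ {d : ℕ} (s : ℕ → Fin d → List (Fin d)) (n : ℕ) : Matrix (Fin d) (Fin d) ℤ :=
  Matrix.of fun i j => ((s n j).count i : ℤ)

/-- The product `M_m ⋯ M_{n-1}` of incidence matrices. -/
def incZProd {d : ℕ} (s : ℕ → Fin d → List (Fin d)) (m n : ℕ) : Matrix (Fin d) (Fin d) ℤ :=
  ((List.range (n - m)).map fun k => incZ s (m + k)).prod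

/-- `σ_{[0,n)}(a)`: the word obtained by applying `σ_0 ∘ ⋯ ∘ σ_{n-1}` to the letter `a`. -/
def sadicWord {d : ℕ} (s : ℕ → Fin d → List (Fin d)) : ℕ → Fin d → List (Fin d)
  | 0, a => [a]
  | n + 1, a => (s n a).flatMap (sadicWord s n)

/-- The language of the directive sequence `σ`. -/
def InLang {d : ℕ} (s : ℕ → Fin d → List (Fin d)) (v : List (Fin d)) : Prop :=
  ∃ n a, v <:+: sadicWord s n a

/-- The projection onto `w^⊥` along `u`. -/
noncomputable def projUW {d : ℕ} (u w x : Fin d → ℝ) : Fin d → ℝ :=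
  x - ((∑ i, x i * w i) / (∑ i, u i * w i)) • u

/-- The abelianization of a word. -/
def abel {d : ℕ} (p : List (Fin d)) : Fin d → ℝ := fun i => (p.count i : ℝ)

/-- `p` is a prefix of the infinite sequence `x`. -/
def IsPrefixSeq {d : ℕ} (p : List (Fin d)) (x : ℕ → Fin d) : Prop :=
  ∀ j < p.length, p.getD j (x 0) = x j

/-- The Rauzy fractal of `σ` in the representation space `w^⊥`. -/
noncomputable def RauzyFractal {d : ℕ} (s : ℕ → Fin d → List (Fin d)) (u w : Fin d → ℝ) :
    Set (Fin d → ℝ) :=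
  closure {y | ∃ p x, IsLimitSeq s x ∧ IsPrefixSeq p x ∧ y = projUW u w (abel p)}

/-- The subtile `R_w(i)` of the Rauzy fractal. -/
noncomputable def RauzySubtile {d : ℕ} (s : ℕ → Fin d → List (Fin d)) (u w : Fin d → ℝ)
    (i : Fin d) : Set (Fin d → ℝ) :=
  closure {y | ∃ p x, IsLimitSeq s x ∧ IsPrefixSeq (p ++ [i]) x ∧ y = projUW u w (abel p)}

namespace Stmt15Aux

variable {d : ℕ}

/-- first `k` letters of an infinite word -/
def pref (x : ℕ → Fin d) (k : ℕ) : List (Fin d) := (List.range k).map x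

@[simp] lemma length_pref (x : ℕ → Fin d) (k : ℕ) : (pref x k).length = k := by
  simp [pref]

lemma pref_take (x : ℕ → Fin d) {k k' : ℕ} (h : k ≤ k') : pref x k = (pref x k').take k := by
  simp [pref, ← List.map_take, List.take_range, Nat.min_eq_left h]

lemma pref_prefix (x : ℕ → Fin d) {k k' : ℕ} (h : k ≤ k') : pref x k <+: pref x k' := by
  rw [pref_take x h]; exact List.take_prefix _ _

lemma pref_succ (x : ℕ → Fin d) (k : ℕ) : pref x (k + 1) = pref x k ++ [x k] := by
  simp [pref, List.range_succ]

@[simp] lemma pref_one (x : ℕ → Fin d) : pref x 1 = [x 0] := by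
  rw [pref_succ]; simp [pref]

lemma getElem_pref (x : ℕ → Fin d) {k j : ℕ} (h : j < k) :
    (pref x k)[j]'(by simpa using h) = x j := by
  simp [pref]

lemma getD_pref (x : ℕ → Fin d) {k j : ℕ} (h : j < k) (z : Fin d) :
    (pref x k).getD j z = x j := by
  rw [List.getD_eq_getElem _ _ (by simpa using h), getElem_pref x h]

lemma isPrefixSeq_pref (x : ℕ → Fin d) (k : ℕ) : IsPrefixSeq (pref x k) x := by
  intro j hj
  exact getD_pref x (by simpa using hj) _

lemma eq_pref {p : List (Fin d)} {x : ℕ → Fin d} (h : IsPrefixSeq p x) :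
    p = pref x p.length := by
  apply List.ext_getElem (by simp)
  intro j h1 h2
  rw [getElem_pref x (by simpa using h2), ← List.getD_eq_getElem p (x 0) h1]
  exact h j h1

lemma getElem_of_isPrefixSeq {p : List (Fin d)} {x : ℕ → Fin d} (h : IsPrefixSeq p x)
    {j : ℕ} (hj : j < p.length) : p[j] = x j := by
  have := h j hj
  rwa [List.getD_eq_getElem _ _ hj] at this

lemma isPrefixSeq_of_prefix {p q : List (Fin d)} {x : ℕ → Fin d} (hq : IsPrefixSeq q x)
    (h : p <+: q) : IsPrefixSeq p x := by
  intro j hj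
  rw [List.getD_eq_getElem _ _ hj, h.getElem hj]
  exact getElem_of_isPrefixSeq hq (lt_of_lt_of_le hj h.length_le)

/-- the shorter of two prefixes of `x` is a `List`-prefix of the longer -/
lemma pref_prefix_of_isPrefixSeq {q : List (Fin d)} {x : ℕ → Fin d} (hq : IsPrefixSeq q x)
    {k : ℕ} (hk : k ≤ q.length) : pref x k <+: q := by
  conv_rhs => rw [eq_pref hq]
  exact Stmt15Aux.pref_prefix x hk

lemma getD_eq_of_isPrefixSeq {p q : List (Fin d)} {x : ℕ → Fin d} (hp : IsPrefixSeq p x)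
    (hq : IsPrefixSeq q x) {j : ℕ} (hjp : j < p.length) (hjq : j < q.length) (z z' : Fin d) :
    p.getD j z = q.getD j z' := by
  rw [List.getD_eq_getElem _ _ hjp, List.getD_eq_getElem _ _ hjq,
    getElem_of_isPrefixSeq hp hjp, getElem_of_isPrefixSeq hq hjq]

/-! ### flatMap lemmas -/

lemma flatMap_prefix_mono {α β : Type*} {l₁ l₂ : List α} (f : α → List β) (h : l₁ <+: l₂) :
    l₁.flatMap f <+: l₂.flatMap f := by
  obtain ⟨t, rfl⟩ := h
  rw [List.flatMap_append]
  exact List.prefix_append _ _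

lemma flatMap_infix_mono {α β : Type*} {l₁ l₂ : List α} (f : α → List β) (h : l₁ <:+: l₂) :
    l₁.flatMap f <:+: l₂.flatMap f := by
  obtain ⟨t, t', rfl⟩ := h
  rw [List.flatMap_append, List.flatMap_append]
  exact ⟨t.flatMap f, t'.flatMap f, rfl⟩

lemma length_le_length_flatMap {α β : Type*} (l : List α) (f : α → List β)
    (hf : ∀ a, f a ≠ []) : l.length ≤ (l.flatMap f).length := by
  induction l with
  | nil => simp
  | cons a l ih =>
      rw [List.flatMap_cons, List.length_append, List.length_cons]
      have : 1 ≤ (f a).length := List.length_pos_iff.mpr (hf a)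
      omega

lemma mul_length_le_length_flatMap {α β : Type*} (l : List α) (f : α → List β) (D : ℕ)
    (hf : ∀ a, D ≤ (f a).length) : D * l.length ≤ (l.flatMap f).length := by
  induction l with
  | nil => simp
  | cons a l ih =>
      rw [List.flatMap_cons, List.length_append, List.length_cons, Nat.mul_succ]
      have := hf a
      omega

lemma getElem_flatMap_singleton {α : Type*} (l : List α) :
    l.flatMap (fun a => [a]) = l := by
  simp

lemma infix_flatMap_of_getElem {α β : Type*} (l : List α) (f : α → List β) {j : ℕ}
    (hj : j < l.length) : f l[j] <:+: l.flatMap f := by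
  have : l = l.take j ++ l[j] :: l.drop (j+1) := by
    rw [List.getElem_cons_drop]; exact (List.take_append_drop j l).symm
  conv_rhs => rw [this]
  rw [List.flatMap_append, List.flatMap_cons]
  exact ⟨l.take j |>.flatMap f, (l.drop (j+1)).flatMap f, by simp [List.append_assoc]⟩

/-! ### counting -/

lemma length_eq_sum_count (l : List (Fin d)) : l.length = ∑ i : Fin d, l.count i := by
  induction l with
  | nil => simp
  | cons a l ih =>
      simp only [List.length_cons, List.count_cons, ih]
      rw [Finset.sum_add_distrib]
      simp [Finset.sum_ite_eq' (Finset.univ : Finset (Fin d)) a]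

lemma count_flatMap_eq_sum (l : List (Fin d)) (f : Fin d → List (Fin d)) (i : Fin d) :
    (l.flatMap f).count i = ∑ b : Fin d, l.count b * (f b).count i := by
  induction l with
  | nil => simp
  | cons a l ih =>
      rw [List.flatMap_cons, List.count_append, ih]
      simp only [List.count_cons, beq_iff_eq]
      have : ∀ b : Fin d, (l.count b + if a = b then 1 else 0) * (f b).count i
          = l.count b * (f b).count i + (if b = a then (f b).count i else 0) := by
        intro b
        rcases eq_or_ne b a with rfl | hb
        · simp [Nat.add_mul]
        · rw [if_neg (Ne.symm hb), if_neg hb]; simp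
      rw [Finset.sum_congr rfl (fun b _ => this b), Finset.sum_add_distrib]
      rw [Finset.sum_ite_eq' (Finset.univ : Finset (Fin d)) a (fun b => (f b).count i)]
      simp [Nat.add_comm]

/-! ### the shifted s-adic words `T s n m a = σ_{[n,n+m)}(a)` -/

def T (s : ℕ → Fin d → List (Fin d)) (n : ℕ) : ℕ → Fin d → List (Fin d)
  | 0, a => [a]
  | m+1, a => (s (n+m) a).flatMap (T s n m)

lemma T_succ_top (s : ℕ → Fin d → List (Fin d)) (n m : ℕ) (a : Fin d) :
    T s n (m+1) a = (s (n+m) a).flatMap (T s n m) := rfl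

lemma sadicWord_eq_T (s : ℕ → Fin d → List (Fin d)) (n : ℕ) :
    sadicWord s n = T s 0 n := by
  induction n with
  | zero => rfl
  | succ n ih =>
      funext a
      rw [sadicWord, T_succ_top, ih, Nat.zero_add]

lemma T_succ_bot (s : ℕ → Fin d → List (Fin d)) (n m : ℕ) (a : Fin d) :
    T s n (m+1) a = (T s (n+1) m a).flatMap (s n) := by
  induction m generalizing a with
  | zero => simp [T]
  | succ m ih =>
      rw [T_succ_top]
      have h1 : T s (n+1) (m+1) a = (s (n+1+m) a).flatMap (T s (n+1) m) := rfl
      rw [h1, List.flatMap_assoc]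
      have : n + (m+1) = n+1+m := by omega
      rw [this]
      exact congrArg (fun f => List.flatMap f _) (funext fun b => ih b)

lemma T_comp (s : ℕ → Fin d → List (Fin d)) (n m k : ℕ) (a : Fin d) :
    T s n (m+k) a = (T s (n+m) k a).flatMap (T s n m) := by
  induction k generalizing a with
  | zero => simp [T]
  | succ k ih =>
      have : m + (k+1) = (m+k)+1 := rfl
      rw [this, T_succ_top, T_succ_top]
      rw [List.flatMap_assoc]
      have hidx : n + (m+k) = n+m+k := by omega
      rw [hidx]
      exact congrArg (fun f => List.flatMap f _) (funext fun b => ih b)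

lemma T_ne_nil {s : ℕ → Fin d → List (Fin d)} (hne : ∀ n a, s n a ≠ []) (n m : ℕ) (a : Fin d) :
    T s n m a ≠ [] := by
  induction m generalizing a with
  | zero => simp [T]
  | succ m ih =>
      rw [T_succ_top, ← List.length_pos_iff]
      calc 0 < (s (n+m) a).length := List.length_pos_iff.mpr (hne _ _)
        _ ≤ _ := length_le_length_flatMap _ _ (fun b => ih b)

lemma one_le_length_T {s : ℕ → Fin d → List (Fin d)} (hne : ∀ n a, s n a ≠ [])
    (n m : ℕ) (a : Fin d) : 1 ≤ (T s n m a).length :=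
  List.length_pos_iff.mpr (T_ne_nil hne n m a)

/-! ### incidence matrices -/

@[simp] lemma incZProd_self (s : ℕ → Fin d → List (Fin d)) (n : ℕ) : incZProd s n n = 1 := by
  simp [incZProd]

lemma incZProd_succ (s : ℕ → Fin d → List (Fin d)) (n m : ℕ) :
    incZProd s n (n + (m+1)) = incZProd s n (n+m) * incZ s (n+m) := by
  unfold incZProd
  have h1 : n + (m+1) - n = m+1 := by omega
  have h2 : n + m - n = m := by omega
  rw [h1, h2, List.range_succ, List.map_append, List.prod_append]
  simp

lemma incZ_nonneg (s : ℕ → Fin d → List (Fin d)) (n : ℕ) (i j : Fin d) :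
    0 ≤ incZ s n i j := by
  simp [incZ]

lemma count_T (s : ℕ → Fin d → List (Fin d)) (n m : ℕ) (i a : Fin d) :
    ((T s n m a).count i : ℤ) = incZProd s n (n+m) i a := by
  induction m generalizing i a with
  | zero =>
      simp only [Nat.add_zero, incZProd_self]
      rw [show T s n 0 a = [a] from rfl]
      rcases eq_or_ne i a with rfl | h
      · simp [Matrix.one_apply]
      · simp [Matrix.one_apply, h, Ne.symm h, List.count_singleton]
  | succ m ih =>
      rw [T_succ_top, incZProd_succ, Matrix.mul_apply, count_flatMap_eq_sum]
      push_cast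
      apply Finset.sum_congr rfl
      intro b _
      rw [← ih i b]
      have : (incZ s (n+m)) b a = ((s (n+m) a).count b : ℤ) := rfl
      rw [this]
      ring

lemma count_T_nat (s : ℕ → Fin d → List (Fin d)) (n m : ℕ) (i a : Fin d) :
    ((T s n m a).count i : ℤ) = incZProd s n (n+m) i a := count_T s n m i a

lemma incZProd_nonneg (s : ℕ → Fin d → List (Fin d)) (n m : ℕ) (i a : Fin d) (h : n ≤ m) :
    0 ≤ incZProd s n m i a := by
  obtain ⟨k, rfl⟩ := Nat.exists_eq_add_of_le h
  rw [← count_T]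
  positivity

lemma incZProd_split (s : ℕ → Fin d → List (Fin d)) (n m k : ℕ) :
    incZProd s n (n+m+k) = incZProd s n (n+m) * incZProd s (n+m) (n+m+k) := by
  induction k with
  | zero => simp
  | succ k ih =>
      calc incZProd s n (n+m+(k+1))
          = incZProd s n (n+((m+k)+1)) := by
            rw [show n+m+(k+1) = n+((m+k)+1) from by omega]
        _ = incZProd s n (n+(m+k)) * incZ s (n+(m+k)) := incZProd_succ s n (m+k)
        _ = incZProd s n (n+m+k) * incZ s (n+m+k) := by
            rw [show n+(m+k) = n+m+k from by omega]
        _ = (incZProd s n (n+m) * incZProd s (n+m) (n+m+k)) * incZ s (n+m+k) := by rw [ih]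
        _ = incZProd s n (n+m) * (incZProd s (n+m) (n+m+k) * incZ s (n+m+k)) :=
            Matrix.mul_assoc _ _ _
        _ = incZProd s n (n+m) * incZProd s (n+m) (n+m+(k+1)) := by
            rw [← incZProd_succ s (n+m) k]

lemma length_T (s : ℕ → Fin d → List (Fin d)) (n m : ℕ) (a : Fin d) :
    ((T s n m a).length : ℤ) = ∑ i : Fin d, incZProd s n (n+m) i a := by
  rw [length_eq_sum_count]
  push_cast
  exact Finset.sum_congr rfl fun i _ => count_T s n m i a

lemma det_incZProd_ne_zero {s : ℕ → Fin d → List (Fin d)}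
    (hunimod : ∀ n, (incZ s n).det = 1 ∨ (incZ s n).det = -1) (m : ℕ) :
    (incZProd s 0 m).det ≠ 0 := by
  induction m with
  | zero => simp
  | succ m ih =>
      have : incZProd s 0 (0 + (m+1)) = incZProd s 0 (0+m) * incZ s (0+m) :=
        incZProd_succ s 0 m
      simp only [Nat.zero_add] at this
      rw [this, Matrix.det_mul]
      rcases hunimod m with h | h <;> rw [h] <;> simpa

/-! ### structure of limit sequences -/

lemma getD_eq_of_prefix {α : Type*} {l₁ l₂ : List α} (h : l₁ <+: l₂) {j : ℕ}
    (h₁ : j < l₁.length) (z z' : α) : l₁.getD j z = l₂.getD j z' := by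
  rw [List.getD_eq_getElem _ _ h₁,
    List.getD_eq_getElem _ _ (lt_of_lt_of_le h₁ h.length_le), h.getElem h₁]

/-- one-step desubstitution: images of prefixes of `y` are prefixes of `subApplyG f y`. -/
lemma isPrefixSeq_flatMap_subApplyG {f : Fin d → List (Fin d)} (hf : ∀ a, f a ≠ [])
    {x y : ℕ → Fin d} (hx : x = subApplyG f y) (k : ℕ) :
    IsPrefixSeq ((pref y k).flatMap f) x := by
  intro j hj
  have hxj : x j = ((pref y (j+1)).flatMap f).getD j (y 0) := by rw [hx]; rfl
  rw [hxj]
  have hj' : j < ((pref y (j+1)).flatMap f).length := by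
    have h := length_le_length_flatMap (pref y (j+1)) f hf
    rw [length_pref] at h
    omega
  rcases le_total k (j+1) with h | h
  · exact getD_eq_of_prefix (flatMap_prefix_mono f (pref_prefix y h)) hj _ _
  · exact (getD_eq_of_prefix (flatMap_prefix_mono f (pref_prefix y h)) hj' _ _).symm

section WS

variable {s : ℕ → Fin d → List (Fin d)} (hne : ∀ n a, s n a ≠ [])
  {ws : ℕ → ℕ → Fin d} (hws : ∀ n, ws n = subApplyG (s n) (ws (n + 1)))

include hne hws

/-- multi-step desubstitution. -/
lemma isPrefixSeq_flatMap_T (m : ℕ) : ∀ n k,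
    IsPrefixSeq ((pref (ws (n+m)) k).flatMap (T s n m)) (ws n) := by
  induction m with
  | zero =>
      intro n k
      rw [show (T s n 0) = (fun a => [a]) from rfl, getElem_flatMap_singleton]
      exact isPrefixSeq_pref _ _
  | succ m ih =>
      intro n k
      have h1 : IsPrefixSeq ((pref (ws (n+1+m)) k).flatMap (T s (n+1) m)) (ws (n+1)) :=
        ih (n+1) k
      have h2 : IsPrefixSeq
          ((pref (ws (n+1)) ((pref (ws (n+1+m)) k).flatMap (T s (n+1) m)).length).flatMap (s n))
          (ws n) := isPrefixSeq_flatMap_subApplyG (hne n) (hws n) _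
      rw [← eq_pref h1] at h2
      rw [List.flatMap_assoc] at h2
      have e : n+1+m = n+(m+1) := by omega
      rw [e] at h2
      have : (fun a => (T s (n+1) m a).flatMap (s n)) = T s n (m+1) := by
        funext a; rw [T_succ_bot]
      rwa [this] at h2

omit hws in
lemma growth_T (hprim : ∀ m : ℕ, ∃ n > m, ∀ i j, 0 < incZProd s m n i j) (hd : 2 ≤ d) :
    ∀ L n, ∃ m, ∀ a, L ≤ (T s n m a).length := by
  have key : ∀ k n, ∃ m, ∀ a, 2^k ≤ (T s n m a).length := by
    intro k
    induction k with
    | zero => intro n; exact ⟨0, fun a => one_le_length_T hne n 0 a⟩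
    | succ k ih =>
        intro n
        obtain ⟨n', hn', hpos⟩ := hprim n
        obtain ⟨m', hm'⟩ := ih n'
        refine ⟨(n'-n) + m', fun a => ?_⟩
        rw [T_comp]
        have hblock : ∀ b, 2 ≤ (T s n (n'-n) b).length := by
          intro b
          have : (d : ℤ) ≤ ((T s n (n'-n) b).length : ℤ) := by
            rw [length_T]
            calc (d : ℤ) = ∑ _i : Fin d, 1 := by simp
              _ ≤ _ := Finset.sum_le_sum fun i _ => by
                  have := hpos i b
                  rw [show n + (n'-n) = n' from by omega]
                  omega
          have h2d : (2:ℤ) ≤ d := by exact_mod_cast hd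
          exact_mod_cast le_trans h2d this
        calc (2:ℕ)^(k+1) = 2 * 2^k := by ring
          _ ≤ 2 * (T s (n+(n'-n)) m' a).length := by
              rw [show n + (n'-n) = n' from by omega]
              exact Nat.mul_le_mul_left 2 (hm' a)
          _ ≤ _ := mul_length_le_length_flatMap _ _ 2 hblock
  intro L n
  obtain ⟨m, hm⟩ := key L n
  exact ⟨m, fun a => le_trans (Nat.le_of_lt (Nat.lt_two_pow_self (n := L))) (hm a)⟩

/-- every letter occurs in every level of a limit sequence. -/
lemma exists_letter (hprim : ∀ m : ℕ, ∃ n > m, ∀ i j, 0 < incZProd s m n i j)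
    (n : ℕ) (a : Fin d) : ∃ j, ws n j = a := by
  obtain ⟨n', hn', hpos⟩ := hprim n
  set m := n' - n with hm
  set b := ws (n+m) 0 with hb
  have hmem : a ∈ T s n m b := by
    rw [← List.count_pos_iff]
    have : (0:ℤ) < ((T s n m b).count a : ℤ) := by
      rw [count_T, show n + m = n' from by omega]
      exact hpos a b
    exact_mod_cast this
  obtain ⟨j, hj, hjel⟩ := List.getElem_of_mem hmem
  have hpre : IsPrefixSeq (T s n m b) (ws n) := by
    have := isPrefixSeq_flatMap_T hne hws m n 1
    rwa [pref_one, List.flatMap_cons, List.flatMap_nil, List.append_nil] at this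
  exact ⟨j, by rw [← getElem_of_isPrefixSeq hpre hj, hjel]⟩

/-- long prefixes of the limit word are prefixes of single s-adic words. -/
lemma pref_le_sadicWord (hprim : ∀ m : ℕ, ∃ n > m, ∀ i j, 0 < incZProd s m n i j)
    (hd : 2 ≤ d) (k : ℕ) : ∃ N c, pref (ws 0) k <+: sadicWord s N c := by
  obtain ⟨m, hm⟩ := growth_T hne hprim hd k 0
  set c := ws (0+m) 0 with hc
  have hpre : IsPrefixSeq (T s 0 m c) (ws 0) := by
    have := isPrefixSeq_flatMap_T hne hws m 0 1
    rwa [pref_one, List.flatMap_cons, List.flatMap_nil, List.append_nil] at this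
  exact ⟨m, c, by
    rw [sadicWord_eq_T]
    exact pref_prefix_of_isPrefixSeq hpre (le_trans (hm c) (le_of_eq rfl))⟩

/-- factors of the limit word are in the language. -/
lemma inLang_of_infix_pref (hprim : ∀ m : ℕ, ∃ n > m, ∀ i j, 0 < incZProd s m n i j)
    (hd : 2 ≤ d) {v : List (Fin d)} {k : ℕ} (h : v <:+: pref (ws 0) k) : InLang s v := by
  obtain ⟨N, c, hNc⟩ := pref_le_sadicWord hne hws hprim hd k
  exact ⟨N, c, h.trans hNc.isInfix⟩

/-- every word of the language occurs in the limit word. -/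
lemma inLang_infix (hprim : ∀ m : ℕ, ∃ n > m, ∀ i j, 0 < incZProd s m n i j)
    {v : List (Fin d)} (hv : InLang s v) : ∃ K, v <:+: pref (ws 0) K := by
  obtain ⟨N, a, hva⟩ := hv
  rw [sadicWord_eq_T] at hva
  obtain ⟨j, hj⟩ := exists_letter hne hws hprim N a
  have hjlt : j < (pref (ws N) (j+1)).length := by simp
  have hblock : T s 0 N a <:+: (pref (ws N) (j+1)).flatMap (T s 0 N) := by
    have := infix_flatMap_of_getElem (pref (ws N) (j+1)) (T s 0 N) hjlt
    rwa [getElem_pref (ws N) (Nat.lt_succ_self j), hj] at this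
  have hpre : IsPrefixSeq ((pref (ws N) (j+1)).flatMap (T s 0 N)) (ws 0) := by
    have := isPrefixSeq_flatMap_T hne hws N 0 (j+1)
    simpa using this
  refine ⟨((pref (ws N) (j+1)).flatMap (T s 0 N)).length, ?_⟩
  rw [← eq_pref hpre]
  exact hva.trans hblock

end WS

/-! ### existence of a limit sequence (König-type argument) -/

section Konig

variable (s : ℕ → Fin d → List (Fin d))

/-- first letter of `s n a` -/
def hd0 (n : ℕ) (a : Fin d) : Fin d := (s n a).headD a

/-- first letter of `σ_{[n,n+k)}(a)` -/
def gcomp : ℕ → ℕ → Fin d → Fin d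
  | _, 0 => id
  | n, k+1 => fun a => hd0 s n (gcomp (n+1) k a)

lemma gcomp_succ_right (n k : ℕ) :
    gcomp s n (k+1) = gcomp s n k ∘ hd0 s (n+k) := by
  induction k generalizing n with
  | zero => rfl
  | succ k ih =>
      funext a
      have h1 : gcomp s n (k+1+1) a = hd0 s n (gcomp s (n+1) (k+1) a) := rfl
      have h2 : gcomp s n (k+1) (hd0 s (n+(k+1)) a)
          = hd0 s n (gcomp s (n+1) k (hd0 s (n+(k+1)) a)) := rfl
      show gcomp s n (k+1+1) a = gcomp s n (k+1) (hd0 s (n+(k+1)) a)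
      rw [h1, h2, ih (n+1)]
      show hd0 s n (gcomp s (n+1) k (hd0 s (n+1+k) a)) = _
      rw [show n+1+k = n+(k+1) from by omega]

variable [NeZero d]

/-- image of the `k`-step first-letter map at level `n` -/
def ImS (n k : ℕ) : Finset (Fin d) := Finset.image (gcomp s n k) Finset.univ

lemma ImS_nonempty (n k : ℕ) : (ImS s n k).Nonempty :=
  ⟨gcomp s n k 0, Finset.mem_image_of_mem _ (Finset.mem_univ 0)⟩

lemma ImS_antitone (n : ℕ) : ∀ {k k' : ℕ}, k ≤ k' → ImS s n k' ⊆ ImS s n k := by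
  have step : ∀ k, ImS s n (k+1) ⊆ ImS s n k := by
    intro k
    rw [ImS, gcomp_succ_right]
    intro a ha
    obtain ⟨b, _, hb⟩ := Finset.mem_image.mp ha
    exact Finset.mem_image.mpr ⟨hd0 s (n+k) b, Finset.mem_univ _, hb⟩
  intro k k' h
  induction h with
  | refl => exact fun a ha => ha
  | step h ih => exact fun a ha => ih (step _ ha)

/-- index where the decreasing image chain stabilizes -/
noncomputable def kst (n : ℕ) : ℕ :=
  (Nat.sInf_mem (Set.range_nonempty (f := fun k => (ImS s n k).card))).choose

/-- stable kernel set -/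
noncomputable def SK (n : ℕ) : Finset (Fin d) := ImS s n (kst s n)

lemma ImS_eq_SK (n : ℕ) {k : ℕ} (h : kst s n ≤ k) : ImS s n k = SK s n := by
  have hmem := Nat.sInf_mem (Set.range_nonempty (f := fun k => (ImS s n k).card))
  have hspec : (ImS s n (kst s n)).card = sInf (Set.range fun k => (ImS s n k).card) :=
    (Nat.sInf_mem (Set.range_nonempty (f := fun k => (ImS s n k).card))).choose_spec
  apply Finset.eq_of_subset_of_card_le (ImS_antitone s n h)
  rw [hspec]
  exact Nat.sInf_le ⟨k, rfl⟩

lemma SK_nonempty (n : ℕ) : (SK s n).Nonempty := ImS_nonempty s n _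

lemma SK_step (n : ℕ) {a : Fin d} (ha : a ∈ SK s n) :
    ∃ b ∈ SK s (n+1), hd0 s n b = a := by
  set k := max (kst s n) (kst s (n+1) + 1) with hk
  have h1 : a ∈ ImS s n k := by
    rw [ImS_eq_SK s n (le_max_left _ _)]; exact ha
  obtain ⟨c, _, hc⟩ := Finset.mem_image.mp h1
  obtain ⟨kk, hkk⟩ : ∃ kk, k = kk + 1 := ⟨k - 1, by omega⟩
  have hkk2 : kst s (n+1) ≤ kk := by omega
  refine ⟨gcomp s (n+1) kk c, ?_, ?_⟩
  · rw [← ImS_eq_SK s (n+1) hkk2]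
    exact Finset.mem_image_of_mem _ (Finset.mem_univ _)
  · rw [← hc, hkk]
    rfl

/-- a compatible chain of first letters -/
noncomputable def chA : (n : ℕ) → {a : Fin d // a ∈ SK s n} :=
  Nat.rec ⟨(SK_nonempty s 0).choose, (SK_nonempty s 0).choose_spec⟩
    (fun n p => ⟨(SK_step s n p.2).choose, (SK_step s n p.2).choose_spec.1⟩)

lemma chA_spec (n : ℕ) : hd0 s n (chA s (n+1)).1 = (chA s n).1 :=
  (SK_step s n (chA s n).2).choose_spec.2

end Konig

section KonigWords

variable {s : ℕ → Fin d → List (Fin d)} (hne : ∀ n a, s n a ≠ []) [NeZero d]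

/-- the chain letter sequence -/
noncomputable def aseq : ℕ → Fin d := fun n => (chA s n).1

include hne

lemma head_s_aseq (n : ℕ) : ∃ t, s n (aseq (s := s) (n+1)) = aseq (s := s) n :: t := by
  have h : hd0 s n (aseq (s := s) (n+1)) = aseq (s := s) n := chA_spec s n
  obtain ⟨c, t, hct⟩ : ∃ c t, s n (aseq (s := s) (n+1)) = c :: t := by
    rcases hc : s n (aseq (s := s) (n+1)) with _ | ⟨c, t⟩
    · exact absurd hc (hne n _)
    · exact ⟨_, _, rfl⟩
  refine ⟨t, ?_⟩
  rw [hct]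
  rw [hd0, hct] at h
  simp at h
  rw [h]

lemma head_T_aseq : ∀ k m, ∃ t, T s m k (aseq (s := s) (m+k)) = aseq (s := s) m :: t := by
  intro k
  induction k with
  | zero => intro m; exact ⟨[], rfl⟩
  | succ k ih =>
      intro m
      obtain ⟨t, ht⟩ := ih (m+1)
      rw [T_succ_bot]
      have e : m + (k+1) = (m+1) + k := by omega
      rw [e, ht, List.flatMap_cons]
      obtain ⟨t', ht'⟩ := head_s_aseq hne m
      rw [ht']
      exact ⟨t' ++ t.flatMap (s m), by simp⟩

lemma T_aseq_chain {m k k' : ℕ} (h : k ≤ k') :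
    T s m k (aseq (s := s) (m+k)) <+: T s m k' (aseq (s := s) (m+k')) := by
  obtain ⟨j, rfl⟩ := Nat.exists_eq_add_of_le h
  rw [T_comp]
  obtain ⟨t, ht⟩ := head_T_aseq hne j (m+k)
  rw [show m + (k+j) = m + k + j from by omega, ht, List.flatMap_cons]
  exact ⟨t.flatMap (T s m k), rfl⟩

variable (hprim : ∀ m : ℕ, ∃ n > m, ∀ i j, 0 < incZProd s m n i j) (hd : 2 ≤ d)

include hprim hd

lemma exG (n j : ℕ) : ∃ k, j < (T s n k (aseq (s := s) (n+k))).length := by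
  obtain ⟨m, hm⟩ := growth_T hne hprim hd (j+1) n
  exact ⟨m, by have := hm (aseq (s := s) (n+m)); omega⟩

/-- the canonical limit sequence system -/
noncomputable def wsc (n : ℕ) (j : ℕ) : Fin d :=
  (T s n (exG hne hprim hd n j).choose
    (aseq (s := s) (n + (exG hne hprim hd n j).choose))).getD j (aseq (s := s) n)

lemma wsc_getD {n k j : ℕ} (hj : j < (T s n k (aseq (s := s) (n+k))).length) (z : Fin d) :
    (T s n k (aseq (s := s) (n+k))).getD j z = wsc hne hprim hd n j := by
  rw [wsc]
  set k' := (exG hne hprim hd n j).choose with hk'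
  have hj' : j < (T s n k' (aseq (s := s) (n+k'))).length := (exG hne hprim hd n j).choose_spec
  rcases le_total k k' with h | h
  · exact getD_eq_of_prefix (T_aseq_chain hne h) hj _ _
  · exact (getD_eq_of_prefix (T_aseq_chain hne h) hj' _ _).symm

lemma wsc_step (n : ℕ) : wsc hne hprim hd n = subApplyG (s n) (wsc hne hprim hd (n+1)) := by
  funext j
  have hrhs : subApplyG (s n) (wsc hne hprim hd (n+1)) j
      = ((pref (wsc hne hprim hd (n+1)) (j+1)).flatMap (s n)).getD j
          (wsc hne hprim hd (n+1) 0) := rfl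
  obtain ⟨k, hk⟩ := exG hne hprim hd (n+1) j
  set W := T s (n+1) k (aseq (s := s) (n+1+k)) with hW
  have hpref : pref (wsc hne hprim hd (n+1)) (j+1) = W.take (j+1) := by
    apply List.ext_getElem
    · rw [length_pref, List.length_take]
      omega
    · intro i h1 h2
      rw [getElem_pref _ (by simpa using h1), List.getElem_take]
      have hiW : i < W.length := by
        rw [List.length_take] at h2
        omega
      rw [← List.getD_eq_getElem W (aseq (s := s) (n+1)) hiW]
      rw [hW] at hiW ⊢
      exact (wsc_getD hne hprim hd hiW _).symm
  have hTsucc : W.flatMap (s n) = T s n (k+1) (aseq (s := s) (n+(k+1))) := by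
    rw [T_succ_bot, show n + (k+1) = n+1+k from by omega]
  have hprefix : (W.take (j+1)).flatMap (s n) <+: T s n (k+1) (aseq (s := s) (n+(k+1))) := by
    rw [← hTsucc]
    exact flatMap_prefix_mono _ (List.take_prefix _ _)
  have hlen : j < ((W.take (j+1)).flatMap (s n)).length := by
    have h1 : (W.take (j+1)).length ≤ ((W.take (j+1)).flatMap (s n)).length :=
      length_le_length_flatMap _ _ (hne n)
    have h2 : (W.take (j+1)).length = j+1 := by
      rw [List.length_take]; omega
    omega
  rw [hrhs, hpref]
  rw [getD_eq_of_prefix hprefix hlen _ (aseq (s := s) n)]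
  exact (wsc_getD hne hprim hd (lt_of_lt_of_le hlen hprefix.length_le) _).symm

lemma exists_limit_system :
    ∃ ws : ℕ → ℕ → Fin d, ∀ n, ws n = subApplyG (s n) (ws (n+1)) :=
  ⟨wsc hne hprim hd, wsc_step hne hprim hd⟩

end KonigWords

/-! ### abelianization and projection -/

lemma abel_append (p q : List (Fin d)) : abel (p ++ q) = abel p + abel q := by
  funext i
  simp [abel, List.count_append]

lemma abel_nonneg (p : List (Fin d)) (i : Fin d) : 0 ≤ abel p i := by
  simp [abel]

lemma abel_le_length (p : List (Fin d)) (i : Fin d) : abel p i ≤ p.length := by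
  have := List.count_le_length (l := p) (a := i)
  show ((p.count i : ℝ)) ≤ _
  exact_mod_cast this

lemma sum_abel (p : List (Fin d)) : ∑ i, abel p i = p.length := by
  rw [length_eq_sum_count]
  push_cast
  rfl

lemma count_T0 (s : ℕ → Fin d → List (Fin d)) (m : ℕ) (i a : Fin d) :
    ((T s 0 m a).count i : ℤ) = incZProd s 0 m i a := by
  have := count_T s 0 m i a
  rwa [Nat.zero_add] at this

lemma abel_flatMap_T (s : ℕ → Fin d → List (Fin d)) (m : ℕ) (l : List (Fin d)) :
    abel (l.flatMap (T s 0 m))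
      = ((incZProd s 0 m).map (fun z : ℤ => (z : ℝ))).mulVec (abel l) := by
  funext i
  rw [Matrix.mulVec]
  show ((l.flatMap (T s 0 m)).count i : ℝ) = _
  rw [count_flatMap_eq_sum]
  push_cast
  rw [show (dotProduct (((incZProd s 0 m).map (fun z : ℤ => (z : ℝ))) i) (abel l))
      = ∑ b, ((incZProd s 0 m) i b : ℝ) * abel l b from rfl]
  apply Finset.sum_congr rfl
  intro b _
  rw [← count_T0 s m i b]
  push_cast [abel]
  ring

section Proj

variable {u w : Fin d → ℝ}

lemma projUW_sub (x y : Fin d → ℝ) :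
    projUW u w (x - y) = projUW u w x - projUW u w y := by
  unfold projUW
  have h1 : (∑ i, (x - y) i * w i) = (∑ i, x i * w i) - (∑ i, y i * w i) := by
    rw [← Finset.sum_sub_distrib]
    apply Finset.sum_congr rfl
    intro i _
    simp [sub_mul]
  rw [h1, sub_div, sub_smul]
  abel

lemma projUW_smul_u (hS : (∑ i, u i * w i) ≠ 0) (t : ℝ) : projUW u w (t • u) = 0 := by
  unfold projUW
  have h1 : (∑ i, (t • u) i * w i) = t * (∑ i, u i * w i) := by
    rw [Finset.mul_sum]
    apply Finset.sum_congr rfl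
    intro i _
    simp [mul_assoc]
  rw [h1, mul_div_assoc, div_self hS, mul_one]
  simp

lemma abs_projUW_le (hSpos : 0 < (∑ i, u i * w i)) (x : Fin d → ℝ) (B : ℝ)
    (hx : ∀ i, |x i| ≤ B) (i : Fin d) :
    |projUW u w x i| ≤ B + B * (∑ i, |w i|) / (∑ i, u i * w i) * |u i| := by
  unfold projUW
  have h1 : |(∑ j, x j * w j)| ≤ B * (∑ j, |w j|) := by
    calc |(∑ j, x j * w j)| ≤ ∑ j, |x j * w j| := Finset.abs_sum_le_sum_abs _ _
      _ ≤ ∑ j, B * |w j| := by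
          apply Finset.sum_le_sum
          intro j _
          rw [abs_mul]
          have h0 : (0:ℝ) ≤ |w j| := abs_nonneg _
          exact mul_le_mul_of_nonneg_right (hx j) h0
      _ = B * (∑ j, |w j|) := by rw [Finset.mul_sum]
  show |x i - ((∑ j, x j * w j) / (∑ j, u j * w j)) * u i| ≤ _
  calc |x i - ((∑ j, x j * w j) / (∑ j, u j * w j)) * u i|
      ≤ |x i| + |((∑ j, x j * w j) / (∑ j, u j * w j)) * u i| := abs_sub _ _
    _ ≤ B + B * (∑ j, |w j|) / (∑ j, u j * w j) * |u i| := by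
        apply add_le_add (hx i)
        rw [abs_mul, abs_div, abs_of_pos hSpos]
        apply mul_le_mul_of_nonneg_right _ (abs_nonneg _)
        exact (div_le_div_iff_of_pos_right hSpos).mpr h1

end Proj

/-! ### the frequency vector -/

lemma det_map_cast (M : Matrix (Fin d) (Fin d) ℤ) :
    (M.map (fun z : ℤ => (z : ℝ))).det = (M.det : ℝ) := by
  rw [show (M.map (fun z : ℤ => (z : ℝ))) = (Int.castRingHom ℝ).mapMatrix M from rfl,
    ← RingHom.map_det]
  rfl

lemma mulVec_lim_cone {M : Matrix (Fin d) (Fin d) ℝ} (hdet : M.det ≠ 0) {y : ℕ → Fin d → ℝ}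
    (hy : ∀ j i, 0 ≤ y j i) {α : Fin d → ℝ}
    (h : Filter.Tendsto (fun j => M.mulVec (y j)) Filter.atTop (nhds α)) :
    ∃ z : Fin d → ℝ, (∀ i, 0 ≤ z i) ∧ α = M.mulVec z := by
  have hunit : IsUnit M.det := isUnit_iff_ne_zero.mpr hdet
  have hcontinv : Continuous fun v : Fin d → ℝ => M⁻¹.mulVec v := by
    have : (fun v : Fin d → ℝ => M⁻¹.mulVec v) = ⇑(Matrix.mulVecLin M⁻¹) := by
      funext v; rfl
    rw [this]
    exact LinearMap.continuous_of_finiteDimensional _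
  have hyeq : ∀ j, y j = M⁻¹.mulVec (M.mulVec (y j)) := by
    intro j
    rw [Matrix.mulVec_mulVec, Matrix.nonsing_inv_mul M hunit, Matrix.one_mulVec]
  set z := M⁻¹.mulVec α with hz
  have hytend : Filter.Tendsto y Filter.atTop (nhds z) := by
    have h2 := (hcontinv.tendsto α).comp h
    have heq : ((fun v => M⁻¹.mulVec v) ∘ fun j => M.mulVec (y j)) = y := by
      funext j
      exact (hyeq j).symm
    rwa [heq] at h2
  refine ⟨z, ?_, ?_⟩
  · intro i
    have hco : Filter.Tendsto (fun j => y j i) Filter.atTop (nhds (z i)) :=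
      ((continuous_apply i).tendsto z).comp hytend
    exact ge_of_tendsto hco (Filter.Eventually.of_forall fun j => hy j i)
  · have hcont : Continuous fun v : Fin d → ℝ => M.mulVec v := by
      have : (fun v : Fin d → ℝ => M.mulVec v) = ⇑(Matrix.mulVecLin M) := by
        funext v; rfl
      rw [this]
      exact LinearMap.continuous_of_finiteDimensional _
    have h2 : Filter.Tendsto (fun j => M.mulVec (y j)) Filter.atTop (nhds (M.mulVec z)) :=
      (hcont.tendsto z).comp hytend
    exact tendsto_nhds_unique h h2

section Freq

variable {s : ℕ → Fin d → List (Fin d)} (hne : ∀ n a, s n a ≠ [])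
  (hprim : ∀ m : ℕ, ∃ n > m, ∀ i j, 0 < incZProd s m n i j)
  {ws : ℕ → ℕ → Fin d} (hws : ∀ n, ws n = subApplyG (s n) (ws (n + 1)))

include hne hws

/-- decomposition of prefixes of the limit word at level `m`. -/
lemma pref_decomp (m n : ℕ) :
    ∃ (t : ℕ) (r : List (Fin d)), r.length ≤ ∑ a, (T s 0 m a).length ∧
      abel (pref (ws 0) n)
        = ((incZProd s 0 m).map (fun z : ℤ => (z : ℝ))).mulVec (abel (pref (ws m) t))
            + abel r := by
  classical
  set F : ℕ → List (Fin d) := fun t => (pref (ws m) t).flatMap (T s 0 m) with hF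
  have hFlen : ∀ t, t ≤ (F t).length := by
    intro t
    have h1 := length_le_length_flatMap (pref (ws m) t) (T s 0 m) (T_ne_nil hne 0 m)
    rwa [length_pref] at h1
  have hFpre : ∀ t, IsPrefixSeq (F t) (ws 0) := by
    intro t
    have := isPrefixSeq_flatMap_T hne hws m 0 t
    rwa [Nat.zero_add] at this
  set P : ℕ → Prop := fun t => (F t).length ≤ n with hPdef
  have hP0 : P 0 := by simp [hPdef, hF, pref]
  set t0 := Nat.findGreatest P n with ht0def
  have ht0 : P t0 := Nat.findGreatest_spec (Nat.zero_le n) hP0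
  have htup : n < (F (t0+1)).length := by
    rcases le_or_gt (t0+1) n with h | h
    · by_contra hcon
      exact (Nat.findGreatest_is_greatest (Nat.lt_succ_self t0) h) (not_lt.mp hcon)
    · have := hFlen (t0+1)
      omega
  have hsplit : F (t0+1) = F t0 ++ T s 0 m (ws m t0) := by
    rw [hF]
    simp only []
    rw [pref_succ, List.flatMap_append]
    simp
  have hFprefix : F t0 <+: pref (ws 0) n := by
    have h1 : F t0 = pref (ws 0) (F t0).length := eq_pref (hFpre t0)
    rw [h1]
    exact pref_prefix _ ht0
  set r := (pref (ws 0) n).drop (F t0).length with hr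
  have hsplit2 : pref (ws 0) n = F t0 ++ r := by
    rw [hr]
    conv_lhs => rw [← List.take_append_drop (F t0).length (pref (ws 0) n)]
    congr 1
    exact (List.prefix_iff_eq_take.mp hFprefix).symm
  refine ⟨t0, r, ?_, ?_⟩
  · have hrlen : r.length = n - (F t0).length := by
      rw [hr, List.length_drop, length_pref]
    have hlen1 : (F (t0+1)).length = (F t0).length + (T s 0 m (ws m t0)).length := by
      rw [hsplit, List.length_append]
    have hble : (T s 0 m (ws m t0)).length ≤ ∑ a, (T s 0 m a).length :=
      Finset.single_le_sum (f := fun a => (T s 0 m a).length)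
        (fun a _ => Nat.zero_le _) (Finset.mem_univ _)
    omega
  · rw [hsplit2, abel_append, abel_flatMap_T]

end Freq

section Alpha

open Filter Topology

variable {s : ℕ → Fin d → List (Fin d)} (hne : ∀ n a, s n a ≠ [])
  (hprim : ∀ m : ℕ, ∃ n > m, ∀ i j, 0 < incZProd s m n i j)
  {ws : ℕ → ℕ → Fin d} (hws : ∀ n, ws n = subApplyG (s n) (ws (n + 1)))
  (hd : 2 ≤ d)
  (hunimod : ∀ n, (incZ s n).det = 1 ∨ (incZ s n).det = -1)
  {u : Fin d → ℝ} (hupos : ∀ i, 0 < u i)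
  (heig : (⋂ n : ℕ,
        (fun x => ((incZProd s 0 n).map (fun z : ℤ => (z : ℝ))).mulVec x) ''
          {x : Fin d → ℝ | ∀ i, 0 ≤ x i})
      = {x : Fin d → ℝ | ∃ t : ℝ, 0 ≤ t ∧ x = t • u})

include hne hws hd hunimod hupos heig

lemma alpha_id {α : Fin d → ℝ} {g : ℕ → ℕ}
    (hg : ∀ j, 1 ≤ g j) (hgtop : Tendsto (fun j => (g j : ℝ)) atTop atTop)
    (hα : Tendsto (fun j => ((g j : ℝ))⁻¹ • abel (pref (ws 0) (g j))) atTop (𝓝 α)) :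
    α = (∑ i, u i)⁻¹ • u := by
  classical
  have hdpos : 0 < d := by omega
  have hnonemp : (Finset.univ : Finset (Fin d)).Nonempty := ⟨⟨0, hdpos⟩, Finset.mem_univ _⟩
  have hS : 0 < ∑ i, u i := Finset.sum_pos (fun i _ => hupos i) hnonemp
  have hgne : ∀ j, ((g j : ℝ)) ≠ 0 := fun j => by
    have := hg j; positivity
  have hco : ∀ i, Tendsto (fun j => ((g j : ℝ))⁻¹ * abel (pref (ws 0) (g j)) i)
      atTop (𝓝 (α i)) := by
    intro i
    exact ((continuous_apply i).tendsto α).comp hα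
  have hsumj : ∀ j, ∑ i, ((g j : ℝ))⁻¹ * abel (pref (ws 0) (g j)) i = 1 := by
    intro j
    rw [← Finset.mul_sum, sum_abel, length_pref]
    field_simp
    exact div_self (hgne j)
  have hsum1 : ∑ i, α i = 1 := by
    have h1 : Tendsto (fun j => ∑ i, ((g j : ℝ))⁻¹ * abel (pref (ws 0) (g j)) i)
        atTop (𝓝 (∑ i, α i)) := tendsto_finset_sum _ (fun i _ => hco i)
    have h2 : (fun j => ∑ i, ((g j : ℝ))⁻¹ * abel (pref (ws 0) (g j)) i)
        = fun _ => (1:ℝ) := funext hsumj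
    rw [h2] at h1
    exact tendsto_nhds_unique h1 tendsto_const_nhds
  have hmem : ∀ m : ℕ, α ∈ (fun v => ((incZProd s 0 m).map (fun z : ℤ => (z : ℝ))).mulVec v) ''
      {x : Fin d → ℝ | ∀ i, 0 ≤ x i} := by
    intro m
    set Mr := (incZProd s 0 m).map (fun z : ℤ => (z : ℝ)) with hMr
    have hdet : Mr.det ≠ 0 := by
      rw [hMr, det_map_cast]
      exact_mod_cast det_incZProd_ne_zero hunimod m
    choose t r hrlen hdecomp using fun n => pref_decomp hne hws m n
    set K : ℝ := ((∑ a, (T s 0 m a).length : ℕ) : ℝ) with hK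
    have hK0 : 0 ≤ K := by positivity
    set y : ℕ → Fin d → ℝ := fun j => ((g j : ℝ))⁻¹ • abel (pref (ws m) (t (g j))) with hy
    have hynn : ∀ j i, 0 ≤ y j i := by
      intro j i
      have h1 : (0:ℝ) ≤ ((g j : ℝ))⁻¹ := by positivity
      exact mul_nonneg h1 (abel_nonneg _ _)
    have herr : Tendsto (fun j => ((g j : ℝ))⁻¹ • abel (r (g j))) atTop (𝓝 0) := by
      refine squeeze_zero_norm (a := fun j => K * ((g j : ℝ))⁻¹) ?_ ?_
      · intro j
        rw [norm_smul]
        have h2 : ‖abel (r (g j))‖ ≤ K := by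
          apply pi_norm_le_iff_of_nonneg hK0 |>.mpr
          intro i
          rw [Real.norm_eq_abs, abs_of_nonneg (abel_nonneg _ _)]
          calc abel (r (g j)) i ≤ (r (g j)).length := abel_le_length _ _
            _ ≤ K := by rw [hK]; exact_mod_cast hrlen (g j)
        calc ‖((g j:ℝ))⁻¹‖ * ‖abel (r (g j))‖ ≤ ‖((g j:ℝ))⁻¹‖ * K :=
              mul_le_mul_of_nonneg_left h2 (norm_nonneg _)
          _ = K * ((g j : ℝ))⁻¹ := by
              rw [Real.norm_eq_abs, abs_of_nonneg (by positivity)]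
              ring
      · have h0 : Tendsto (fun j => ((g j : ℝ))⁻¹) atTop (𝓝 0) := hgtop.inv_tendsto_atTop
        have := h0.const_mul K
        simpa using this
    have hMy : ∀ j, Mr.mulVec (y j)
        = ((g j : ℝ))⁻¹ • abel (pref (ws 0) (g j)) - ((g j : ℝ))⁻¹ • abel (r (g j)) := by
      intro j
      rw [hy]
      simp only []
      rw [Matrix.mulVec_smul, hdecomp (g j), smul_add]
      abel
    have hMtend : Tendsto (fun j => Mr.mulVec (y j)) atTop (𝓝 α) := by
      have h1 := hα.sub herr
      rw [sub_zero] at h1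
      have h2 : (fun j => Mr.mulVec (y j))
          = fun j => ((g j : ℝ))⁻¹ • abel (pref (ws 0) (g j))
              - ((g j : ℝ))⁻¹ • abel (r (g j)) := funext hMy
      rw [h2]
      exact h1
    obtain ⟨z, hz0, hzeq⟩ := mulVec_lim_cone hdet hynn hMtend
    exact ⟨z, hz0, hzeq.symm⟩
  have hαmem : α ∈ {x : Fin d → ℝ | ∃ c : ℝ, 0 ≤ c ∧ x = c • u} := by
    rw [← heig]
    exact Set.mem_iInter.mpr hmem
  obtain ⟨c, hc0, hceq⟩ := hαmem
  have hcS : c * ∑ i, u i = 1 := by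
    rw [hceq] at hsum1
    rw [← hsum1, Finset.mul_sum]
    rfl
  have hc : c = (∑ i, u i)⁻¹ := by
    field_simp
    linarith [hcS]
  rw [hceq, hc]

end Alpha

section FreqBound

open Filter Topology

variable {s : ℕ → Fin d → List (Fin d)} (hne : ∀ n a, s n a ≠ [])
  (hprim : ∀ m : ℕ, ∃ n > m, ∀ i j, 0 < incZProd s m n i j)
  {ws : ℕ → ℕ → Fin d} (hws : ∀ n, ws n = subApplyG (s n) (ws (n + 1)))
  (hd : 2 ≤ d)
  (hunimod : ∀ n, (incZ s n).det = 1 ∨ (incZ s n).det = -1)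
  {u : Fin d → ℝ} (hupos : ∀ i, 0 < u i)
  (heig : (⋂ n : ℕ,
        (fun x => ((incZProd s 0 n).map (fun z : ℤ => (z : ℝ))).mulVec x) ''
          {x : Fin d → ℝ | ∀ i, 0 ≤ x i})
      = {x : Fin d → ℝ | ∃ t : ℝ, 0 ≤ t ∧ x = t • u})

include hne hprim hws hd hunimod hupos heig

lemma freq_bound (C : ℕ)
    (hbal : ∀ v v' : List (Fin d), InLang s v → InLang s v' → v.length = v'.length →
      ∀ i, |(v.count i : ℤ) - (v'.count i : ℤ)| ≤ (C : ℤ)) :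
    ∀ (m : ℕ) (i : Fin d),
      |abel (pref (ws 0) m) i - m * ((∑ k, u k)⁻¹ * u i)| ≤ C := by
  classical
  have hC0 : (0:ℝ) ≤ C := by positivity
  have hbalR : ∀ v v' : List (Fin d), InLang s v → InLang s v' → v.length = v'.length →
      ∀ i, |abel v i - abel v' i| ≤ (C : ℝ) := by
    intro v v' h1 h2 h3 i
    have := hbal v v' h1 h2 h3 i
    have h4 : |((v.count i : ℤ) : ℝ) - ((v'.count i : ℤ) : ℝ)| ≤ ((C:ℤ) : ℝ) := by
      rw [← Int.cast_sub, ← Int.cast_abs]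
      exact_mod_cast this
    simpa [abel] using h4
  have hprefL : ∀ m, InLang s (pref (ws 0) m) := fun m =>
    inLang_of_infix_pref hne hws hprim hd (List.infix_refl _)
  have hdrop : ∀ n' m', pref (ws 0) (n'+m')
      = pref (ws 0) n' ++ (pref (ws 0) (n'+m')).drop n' := by
    intro n' m'
    conv_lhs => rw [← List.take_append_drop n' (pref (ws 0) (n'+m'))]
    congr 1
    exact (pref_take (ws 0) (by omega)).symm
  have hdropLang : ∀ n' m', InLang s ((pref (ws 0) (n'+m')).drop n') := fun n' m' =>
    inLang_of_infix_pref hne hws hprim hd ((List.drop_suffix n' _).isInfix)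
  have hdroplen : ∀ n' m', ((pref (ws 0) (n'+m')).drop n').length = m' := by
    intro n' m'
    rw [List.length_drop, length_pref]
    omega
  have habel : ∀ n' m' i, abel (pref (ws 0) (n'+m')) i
      = abel (pref (ws 0) n') i + abel ((pref (ws 0) (n'+m')).drop n') i := by
    intro n' m' i
    conv_lhs => rw [hdrop n' m']
    rw [abel_append]
    rfl
  have claim2 : ∀ n' m' i,
      |abel (pref (ws 0) (n'+m')) i - abel (pref (ws 0) n') i| ≤ (m' : ℝ) := by
    intro n' m' i
    rw [habel n' m' i]
    have h1 := abel_nonneg ((pref (ws 0) (n'+m')).drop n') i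
    have h2 := abel_le_length ((pref (ws 0) (n'+m')).drop n') i
    rw [hdroplen n' m'] at h2
    rw [abs_of_nonneg (by linarith)]
    linarith
  have claim1 : ∀ k m i, |abel (pref (ws 0) (k*m)) i - k * abel (pref (ws 0) m) i|
      ≤ (k : ℝ) * C := by
    intro k m i
    induction k with
    | zero => push_cast; simp [pref, abel]
    | succ k ih =>
        have hsm : (k+1)*m = k*m + m := by ring
        rw [hsm, habel (k*m) m i]
        have hbd : |abel ((pref (ws 0) (k*m+m)).drop (k*m)) i - abel (pref (ws 0) m) i|
            ≤ (C:ℝ) := by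
          apply hbalR _ _ (hdropLang (k*m) m) (hprefL m)
          rw [hdroplen (k*m) m, length_pref]
        have htri := abs_add_le (abel (pref (ws 0) (k*m)) i - k * abel (pref (ws 0) m) i)
          (abel ((pref (ws 0) (k*m+m)).drop (k*m)) i - abel (pref (ws 0) m) i)
        push_cast
        push_cast at ih
        have e : abel (pref (ws 0) (k*m)) i + abel ((pref (ws 0) (k*m+m)).drop (k*m)) i
            - ((k:ℝ)+1) * abel (pref (ws 0) m) i
            = (abel (pref (ws 0) (k*m)) i - k * abel (pref (ws 0) m) i)
              + (abel ((pref (ws 0) (k*m+m)).drop (k*m)) i - abel (pref (ws 0) m) i) := by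
          ring
        rw [e]
        calc _ ≤ _ := htri
          _ ≤ (k:ℝ)*C + C := add_le_add ih hbd
          _ = ((k:ℝ)+1)*C := by ring
  have claim3 : ∀ m n i, 1 ≤ m → 1 ≤ n →
      |abel (pref (ws 0) n) i / n - abel (pref (ws 0) m) i / m|
        ≤ (C:ℝ)/m + 2*m/n := by
    intro m n i hm hn
    set pn := abel (pref (ws 0) n) i with hpn
    set pm := abel (pref (ws 0) m) i with hpm
    set A := abel (pref (ws 0) (n/m*m)) i with hA
    have hmod : m * (n/m) + n % m = n := Nat.div_add_mod n m
    set k := n / m with hk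
    set r := n % m with hr
    have hmod' : k * m + r = n := by rw [Nat.mul_comm m k] at hmod; exact hmod
    have hrm : r < m := Nat.mod_lt _ (by omega)
    have h1 : |A - k * pm| ≤ (k:ℝ) * C := claim1 k m i
    have h2 : |pn - A| ≤ (r : ℝ) := by
      have h3 := claim2 (k*m) r i
      rw [hmod'] at h3
      exact h3
    have hpm0 : 0 ≤ pm := abel_nonneg _ _
    have hpmle : pm ≤ m := by
      have := abel_le_length (pref (ws 0) m) i
      rwa [length_pref] at this
    have hmR : (1:ℝ) ≤ m := by exact_mod_cast hm
    have hm0 : (0:ℝ) < m := by linarith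
    have hnR : (1:ℝ) ≤ n := by exact_mod_cast hn
    have hkm : (k:ℝ) * m + r = n := by exact_mod_cast hmod'
    have hr0 : (0:ℝ) ≤ (r:ℝ) := Nat.cast_nonneg r
    have hrRm : (r:ℝ) ≤ m := by
      have : (r:ℝ) < m := by exact_mod_cast hrm
      linarith
    have key : |(m:ℝ) * pn - n * pm| ≤ n*C + 2*m^2 := by
      have e : (m:ℝ) * pn - n * pm = (m*(pn - A) + m*(A - k*pm)) - r*pm := by
        rw [← hkm]
        ring
      have t1 : |(m:ℝ)*(pn - A)| ≤ m * r := by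
        rw [abs_mul, abs_of_pos hm0]
        exact mul_le_mul_of_nonneg_left h2 (le_of_lt hm0)
      have t2 : |(m:ℝ)*(A - k*pm)| ≤ m * ((k:ℝ)*C) := by
        rw [abs_mul, abs_of_pos hm0]
        exact mul_le_mul_of_nonneg_left h1 (le_of_lt hm0)
      have t3 : |(r:ℝ)*pm| ≤ m * m := by
        rw [abs_of_nonneg (mul_nonneg hr0 hpm0)]
        exact mul_le_mul hrRm hpmle hpm0 (le_of_lt hm0)
      have b1 : (m:ℝ)*r ≤ m*m := mul_le_mul_of_nonneg_left hrRm (le_of_lt hm0)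
      have b2 : (m:ℝ)*((k:ℝ)*C) ≤ n*C := by
        have hmk : (m:ℝ)*k ≤ n := by nlinarith
        calc (m:ℝ)*((k:ℝ)*C) = ((m:ℝ)*k)*C := by ring
          _ ≤ n*C := mul_le_mul_of_nonneg_right hmk hC0
      have hsq : (m:ℝ)^2 = m*m := sq (m:ℝ)
      rw [e]
      calc |((m:ℝ)*(pn - A) + m*(A - k*pm)) - r*pm|
          ≤ |(m:ℝ)*(pn - A) + m*(A - k*pm)| + |(r:ℝ)*pm| := abs_sub _ _
        _ ≤ (|(m:ℝ)*(pn - A)| + |(m:ℝ)*(A - k*pm)|) + |(r:ℝ)*pm| :=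
            add_le_add_left (abs_add_le _ _) _
        _ ≤ (m*r + m*((k:ℝ)*C)) + m*m := by
            apply add_le_add (add_le_add t1 t2) t3
        _ ≤ n*C + 2*m^2 := by rw [hsq]; linarith
    have hden : (0:ℝ) < n * m := by nlinarith
    have e2 : pn/n - pm/m = ((m:ℝ)*pn - n*pm)/(n*m) := by
      field_simp
    rw [e2, abs_div, abs_of_pos hden, div_le_iff₀ hden]
    calc |(m:ℝ)*pn - n*pm| ≤ n*C + 2*m^2 := key
      _ = ((C:ℝ)/m + 2*m/n)*(n*m) := by
          field_simp
  -- extraction of a convergent subsequence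
  set v : ℕ → Fin d → ℝ := fun j => (((j+1 : ℕ)) : ℝ)⁻¹ • abel (pref (ws 0) (j+1)) with hv
  have hvmem : ∀ j, v j ∈ Metric.closedBall (0 : Fin d → ℝ) 1 := by
    intro j
    rw [Metric.mem_closedBall, dist_zero_right]
    apply pi_norm_le_iff_of_nonneg zero_le_one |>.mpr
    intro i
    have h1 : (0:ℝ) < ((j+1:ℕ):ℝ) := by positivity
    have h2 : abel (pref (ws 0) (j+1)) i ≤ ((j+1:ℕ):ℝ) := by
      have := abel_le_length (pref (ws 0) (j+1)) i
      rwa [length_pref] at this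
    show |((j+1:ℕ):ℝ)⁻¹ * abel (pref (ws 0) (j+1)) i| ≤ 1
    rw [abs_of_nonneg (mul_nonneg (by positivity) (abel_nonneg _ _))]
    calc ((j+1:ℕ):ℝ)⁻¹ * abel (pref (ws 0) (j+1)) i ≤ ((j+1:ℕ):ℝ)⁻¹ * ((j+1:ℕ):ℝ) :=
          mul_le_mul_of_nonneg_left h2 (by positivity)
      _ = 1 := inv_mul_cancel₀ (ne_of_gt h1)
  obtain ⟨α, hαmem, σ, hσ, hαt⟩ :=
    tendsto_subseq_of_bounded Metric.isBounded_closedBall hvmem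
  set g : ℕ → ℕ := fun j => σ j + 1 with hg
  have hg1 : ∀ j, 1 ≤ g j := fun j => by
    show 1 ≤ σ j + 1
    omega
  have hgtop : Tendsto (fun j => ((g j : ℕ) : ℝ)) atTop atTop := by
    apply tendsto_atTop_mono (f := fun j : ℕ => ((j:ℕ):ℝ))
    · intro j
      have h5 : j ≤ σ j := hσ.le_apply
      have h6 : j ≤ g j := by
        show j ≤ σ j + 1
        omega
      exact_mod_cast h6
    · exact tendsto_natCast_atTop_atTop
  have hα' : Tendsto (fun j => ((g j : ℕ) : ℝ)⁻¹ • abel (pref (ws 0) (g j))) atTop (𝓝 α) :=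
    hαt
  have hαid : α = (∑ k, u k)⁻¹ • u :=
    alpha_id hne hws hd hunimod hupos heig hg1 hgtop hα'
  have hαi : ∀ i, α i = (∑ k, u k)⁻¹ * u i := fun i => by rw [hαid]; rfl
  intro m i
  rcases Nat.eq_zero_or_pos m with rfl | hm
  · simpa [pref, abel] using hC0
  have hmR : (0:ℝ) < m := by exact_mod_cast hm
  set pm := abel (pref (ws 0) m) i with hpm
  have hfin : |α i - pm/m| ≤ (C:ℝ)/m := by
    have hco : Tendsto (fun j => abel (pref (ws 0) (g j)) i / ((g j : ℕ) : ℝ))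
        atTop (𝓝 (α i)) := by
      have h1 : Tendsto (fun j => ((g j : ℕ) : ℝ)⁻¹ * abel (pref (ws 0) (g j)) i)
          atTop (𝓝 (α i)) := ((continuous_apply i).tendsto α).comp hα'
      have h2 : (fun j => ((g j : ℕ) : ℝ)⁻¹ * abel (pref (ws 0) (g j)) i)
          = fun j => abel (pref (ws 0) (g j)) i / ((g j : ℕ) : ℝ) := by
        funext j
        rw [inv_mul_eq_div]
      rwa [h2] at h1
    have h1 : Tendsto (fun j => |abel (pref (ws 0) (g j)) i / ((g j : ℕ) : ℝ) - pm/m|)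
        atTop (𝓝 (|α i - pm/m|)) := (hco.sub_const (pm/m)).abs
    have h2 : Tendsto (fun j => (C:ℝ)/m + 2*m/((g j : ℕ) : ℝ)) atTop (𝓝 ((C:ℝ)/m + 0)) := by
      apply Tendsto.add tendsto_const_nhds
      exact Tendsto.div_atTop tendsto_const_nhds hgtop
    have hle : |α i - pm/m| ≤ (C:ℝ)/m + 0 :=
      le_of_tendsto_of_tendsto' h1 h2 (fun j => claim3 m (g j) i hm (hg1 j))
    simpa using hle
  have hmne : (m:ℝ) ≠ 0 := ne_of_gt hmR
  have e3 : pm - (m:ℝ)*((∑ k, u k)⁻¹ * u i) = -((m:ℝ) * (α i - pm/m)) := by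
    rw [hαi i]
    field_simp
    ring
  rw [e3, abs_neg, abs_mul, abs_of_pos hmR]
  calc (m:ℝ) * |α i - pm/m| ≤ (m:ℝ) * ((C:ℝ)/m) := mul_le_mul_of_nonneg_left hfin (le_of_lt hmR)
    _ = C := by field_simp

end FreqBound

/-! ### the two directions -/

section Directions

open Filter Topology

variable {s : ℕ → Fin d → List (Fin d)} (hne : ∀ n a, s n a ≠ [])
  (hprim : ∀ m : ℕ, ∃ n > m, ∀ i j, 0 < incZProd s m n i j)
  (hd : 2 ≤ d)
  (hunimod : ∀ n, (incZ s n).det = 1 ∨ (incZ s n).det = -1)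
  {u : Fin d → ℝ} (hupos : ∀ i, 0 < u i)
  (heig : (⋂ n : ℕ,
        (fun x => ((incZProd s 0 n).map (fun z : ℤ => (z : ℝ))).mulVec x) ''
          {x : Fin d → ℝ | ∀ i, 0 ≤ x i})
      = {x : Fin d → ℝ | ∃ t : ℝ, 0 ≤ t ∧ x = t • u})

include hne hprim hd hunimod hupos heig in
lemma backward_dir (C : ℕ)
    (hbal : ∀ v v' : List (Fin d), InLang s v → InLang s v' → v.length = v'.length →
      ∀ i, |(v.count i : ℤ) - (v'.count i : ℤ)| ≤ (C : ℤ)) :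
    ∀ w : Fin d → ℝ, (∀ i, 0 ≤ w i) → w ≠ 0 →
      IsCompact (RauzyFractal s u w) ∧ ∀ i, IsCompact (RauzySubtile s u w i) := by
  intro w hw hw0
  have hC0 : (0:ℝ) ≤ C := by positivity
  obtain ⟨i0, hi0⟩ : ∃ i, w i ≠ 0 := Function.ne_iff.mp hw0
  have hSw : 0 < ∑ i, u i * w i := by
    apply Finset.sum_pos' (fun i _ => mul_nonneg (le_of_lt (hupos i)) (hw i))
    exact ⟨i0, Finset.mem_univ _, mul_pos (hupos i0) (lt_of_le_of_ne (hw i0) (Ne.symm hi0))⟩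
  set Bd : ℝ := C + C * (∑ j, |w j|) / (∑ i, u i * w i) * (∑ j, |u j|) with hBd
  have hcoef : 0 ≤ (C:ℝ) * (∑ j, |w j|) / (∑ i, u i * w i) := by
    apply div_nonneg _ (le_of_lt hSw)
    exact mul_nonneg hC0 (Finset.sum_nonneg fun j _ => abs_nonneg _)
  have hBd0 : 0 ≤ Bd := by
    rw [hBd]
    have h5 : (0:ℝ) ≤ ∑ j, |u j| := Finset.sum_nonneg fun j _ => abs_nonneg (u j)
    have := mul_nonneg hcoef h5
    linarith
  -- every point of the base set lies in the closed ball of radius Bd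
  have hbase : {y | ∃ p x, IsLimitSeq s x ∧ IsPrefixSeq p x ∧ y = projUW u w (abel p)}
      ⊆ Metric.closedBall 0 Bd := by
    rintro y ⟨p, x, ⟨ws, hws0, hws⟩, hp, rfl⟩
    rw [Metric.mem_closedBall, dist_zero_right]
    apply pi_norm_le_iff_of_nonneg hBd0 |>.mpr
    intro i
    have hpx : p = pref (ws 0) p.length := by
      rw [hws0]
      exact eq_pref hp
    set c : ℝ := (p.length : ℝ) * (∑ k, u k)⁻¹ with hc
    set rv : Fin d → ℝ := abel p - c • u with hrv
    have hproj : projUW u w (abel p) = projUW u w rv := by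
      rw [hrv, projUW_sub, projUW_smul_u (ne_of_gt hSw), sub_zero]
    have hrvb : ∀ i, |rv i| ≤ (C:ℝ) := by
      intro i
      have h1 := freq_bound hne hprim hws hd hunimod hupos heig C hbal p.length i
      rw [← hpx] at h1
      have h2 : rv i = abel p i - (p.length : ℝ) * ((∑ k, u k)⁻¹ * u i) := by
        rw [hrv]
        show abel p i - c * u i = _
        rw [hc]
        ring
      rw [h2]
      exact h1
    have := abs_projUW_le hSw rv (C : ℝ) hrvb i
    rw [hproj]
    rw [Real.norm_eq_abs]
    calc |projUW u w rv i| ≤ C + (C:ℝ) * (∑ j, |w j|) / (∑ i, u i * w i) * |u i| := this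
      _ ≤ Bd := by
          rw [hBd]
          have h3 : |u i| ≤ ∑ j, |u j| :=
            Finset.single_le_sum (f := fun j => |u j|) (fun j _ => abs_nonneg _)
              (Finset.mem_univ i)
          have h4 := mul_le_mul_of_nonneg_left h3 hcoef
          linarith
  have hcomp : IsCompact (RauzyFractal s u w) := by
    apply IsCompact.of_isClosed_subset (isCompact_closedBall (0 : Fin d → ℝ) Bd)
      isClosed_closure
    exact closure_minimal hbase Metric.isClosed_closedBall
  refine ⟨hcomp, fun i => ?_⟩
  apply IsCompact.of_isClosed_subset (isCompact_closedBall (0 : Fin d → ℝ) Bd)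
    isClosed_closure
  apply closure_minimal _ Metric.isClosed_closedBall
  rintro y ⟨p, x, hlim, hpre, rfl⟩
  exact hbase ⟨p, x, hlim, isPrefixSeq_of_prefix hpre (p.prefix_append [i]), rfl⟩

include hne hprim hd in
lemma forward_dir {u : Fin d → ℝ}
    (hcomp : IsCompact (RauzyFractal s u (fun _ => (1:ℝ)))) :
    ∃ C : ℕ, ∀ v v' : List (Fin d), InLang s v → InLang s v' →
      v.length = v'.length → ∀ i, |(v.count i : ℤ) - (v'.count i : ℤ)| ≤ (C : ℤ) := by
  classical
  haveI : NeZero d := ⟨by omega⟩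
  obtain ⟨ws, hws⟩ := exists_limit_system hne hprim hd
  have hlim : IsLimitSeq s (ws 0) := ⟨ws, rfl, hws⟩
  set one : Fin d → ℝ := fun _ => (1:ℝ) with hone
  obtain ⟨B, hB⟩ := hcomp.isBounded.subset_closedBall 0
  have hyb : ∀ m, ‖projUW u one (abel (pref (ws 0) m))‖ ≤ B := by
    intro m
    have hmem : projUW u one (abel (pref (ws 0) m)) ∈ RauzyFractal s u one :=
      subset_closure ⟨pref (ws 0) m, ws 0, hlim, isPrefixSeq_pref _ _, rfl⟩
    have := hB hmem
    rwa [Metric.mem_closedBall, dist_zero_right] at this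
  have hvb : ∀ v : List (Fin d), InLang s v → ‖projUW u one (abel v)‖ ≤ 2*B := by
    intro v hv
    obtain ⟨K, hK⟩ := inLang_infix hne hws hprim hv
    obtain ⟨p, q, hpq⟩ := hK
    have hpv : p ++ v <+: pref (ws 0) K := ⟨q, by rw [← hpq, List.append_assoc]⟩
    have hpvseq : IsPrefixSeq (p ++ v) (ws 0) :=
      isPrefixSeq_of_prefix (isPrefixSeq_pref _ _) hpv
    have hpseq : IsPrefixSeq p (ws 0) :=
      isPrefixSeq_of_prefix hpvseq (p.prefix_append v)
    have h1 : p ++ v = pref (ws 0) (p ++ v).length := eq_pref hpvseq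
    have h2 : p = pref (ws 0) p.length := eq_pref hpseq
    have h3 : abel v = abel (pref (ws 0) (p ++ v).length) - abel (pref (ws 0) p.length) := by
      rw [← h1, ← h2, abel_append]
      abel
    rw [h3, projUW_sub]
    calc ‖projUW u one (abel (pref (ws 0) (p ++ v).length))
          - projUW u one (abel (pref (ws 0) p.length))‖
        ≤ ‖projUW u one (abel (pref (ws 0) (p ++ v).length))‖
          + ‖projUW u one (abel (pref (ws 0) p.length))‖ := norm_sub_le _ _
      _ ≤ B + B := add_le_add (hyb _) (hyb _)
      _ = 2*B := by ring
  refine ⟨⌈4*B⌉₊, ?_⟩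
  intro v v' hv hv' hlen i
  have hproj : projUW u one (abel v) i - projUW u one (abel v') i = abel v i - abel v' i := by
    show (abel v i - ((∑ j, abel v j * one j) / (∑ j, u j * one j)) * u i)
      - (abel v' i - ((∑ j, abel v' j * one j) / (∑ j, u j * one j)) * u i)
      = abel v i - abel v' i
    have hsv : ∑ j, abel v j * one j = (v.length : ℝ) := by
      simp only [hone, mul_one]
      exact sum_abel v
    have hsv' : ∑ j, abel v' j * one j = (v'.length : ℝ) := by
      simp only [hone, mul_one]
      exact sum_abel v'
    rw [hsv, hsv', hlen]
    ring
  have habs : |abel v i - abel v' i| ≤ 4*B := by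
    rw [← hproj]
    calc |projUW u one (abel v) i - projUW u one (abel v') i|
        ≤ |projUW u one (abel v) i| + |projUW u one (abel v') i| := abs_sub _ _
      _ ≤ ‖projUW u one (abel v)‖ + ‖projUW u one (abel v')‖ := by
          have n1 : |projUW u one (abel v) i| ≤ ‖projUW u one (abel v)‖ := by
            rw [← Real.norm_eq_abs]
            exact norm_le_pi_norm _ i
          have n2 : |projUW u one (abel v') i| ≤ ‖projUW u one (abel v')‖ := by
            rw [← Real.norm_eq_abs]
            exact norm_le_pi_norm _ i
          exact add_le_add n1 n2
      _ ≤ 2*B + 2*B := add_le_add (hvb v hv) (hvb v' hv')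
      _ = 4*B := by ring
  have hfin : |((v.count i : ℤ) : ℝ) - ((v'.count i : ℤ) : ℝ)| ≤ ((⌈4*B⌉₊ : ℤ) : ℝ) := by
    have h4 : (4*B : ℝ) ≤ ((⌈4*B⌉₊ : ℤ) : ℝ) := by
      push_cast
      exact Nat.le_ceil _
    calc |((v.count i : ℤ) : ℝ) - ((v'.count i : ℤ) : ℝ)| = |abel v i - abel v' i| := by
          simp [abel]
      _ ≤ 4*B := habs
      _ ≤ _ := h4
  rw [← Int.cast_sub, ← Int.cast_abs] at hfin
  exact_mod_cast hfin

end Directions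

section SmallD

variable (s : ℕ → Fin d → List (Fin d))

lemma small_d (hd1 : d ≤ 1) {u : Fin d → ℝ} (hupos : ∀ i, 0 < u i) (w : Fin d → ℝ)
    (hw : ∀ i, 0 ≤ w i) (hw0 : w ≠ 0) :
    IsCompact (RauzyFractal s u w) ∧ ∀ i, IsCompact (RauzySubtile s u w i) := by
  obtain ⟨i0, hi0⟩ : ∃ i, w i ≠ 0 := Function.ne_iff.mp hw0
  have hd0 : 0 < d := lt_of_le_of_lt (Nat.zero_le _) i0.2
  obtain rfl : d = 1 := by omega
  have hi00 : i0 = 0 := Subsingleton.elim _ _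
  have hproj0 : ∀ z : Fin 1 → ℝ, projUW u w z = 0 := by
    intro z
    funext i
    have hi : i = 0 := Subsingleton.elim _ _
    show z i - ((∑ j, z j * w j) / (∑ j, u j * w j)) * u i = 0
    rw [hi, Fin.sum_univ_one, Fin.sum_univ_one]
    have hu0 : u 0 ≠ 0 := ne_of_gt (hupos 0)
    have hw00 : w 0 ≠ 0 := by rwa [hi00] at hi0
    field_simp
    ring
  constructor
  · unfold RauzyFractal
    apply IsCompact.of_isClosed_subset (isCompact_singleton (x := (0 : Fin 1 → ℝ)))
      isClosed_closure
    apply closure_minimal _ isClosed_singleton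
    rintro y ⟨p, x, _, _, rfl⟩
    rw [hproj0 (abel p)]
    rfl
  · intro i
    unfold RauzySubtile
    apply IsCompact.of_isClosed_subset (isCompact_singleton (x := (0 : Fin 1 → ℝ)))
      isClosed_closure
    apply closure_minimal _ isClosed_singleton
    rintro y ⟨p, x, _, _, rfl⟩
    rw [hproj0 (abel p)]
    rfl

end SmallD

end Stmt15Aux

/-- For a primitive and recurrent sequence of unimodular substitutions with generalized
right eigenvector `u`, the Rauzy fractal `R_w` and all its subtiles are compact for all
`w ∈ ℝ^d_{≥0} \ {0}` if and only if the language `L_σ` is finitely balanced. -/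


theorem stmt15 {d : ℕ} (s : ℕ → Fin d → List (Fin d))
    (hne : ∀ n a, s n a ≠ [])
    (hprim : ∀ m : ℕ, ∃ n > m, ∀ i j, 0 < incZProd s m n i j)
    (hrec : ∀ m : ℕ, ∃ n ≥ 1, ∀ k < m, incZ s k = incZ s (n + k))
    (hunimod : ∀ n, (incZ s n).det = 1 ∨ (incZ s n).det = -1)
    (u : Fin d → ℝ) (hupos : ∀ i, 0 < u i)
    (heig : (⋂ n : ℕ,
        (fun x => ((incZProd s 0 n).map (fun z : ℤ => (z : ℝ))).mulVec x) ''
          {x : Fin d → ℝ | ∀ i, 0 ≤ x i})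
      = {x : Fin d → ℝ | ∃ t : ℝ, 0 ≤ t ∧ x = t • u}) :
    (∀ w : Fin d → ℝ, (∀ i, 0 ≤ w i) → w ≠ 0 →
        IsCompact (RauzyFractal s u w) ∧ ∀ i, IsCompact (RauzySubtile s u w i))
      ↔ ∃ C : ℕ, ∀ v v' : List (Fin d), InLang s v → InLang s v' →
          v.length = v'.length → ∀ i, |(v.count i : ℤ) - (v'.count i : ℤ)| ≤ (C : ℤ) := by
  rcases lt_or_ge d 2 with hdlt | hd2
  · -- degenerate alphabets: both sides hold
    constructor
    · intro _
      refine ⟨0, fun v v' hv hv' hlen i => ?_⟩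
      have hsub : ∀ a b : Fin d, a = b := fun a b =>
        Fin.ext (by have := a.2; have := b.2; omega)
      have h1 : v.count i = v.length := by
        rw [List.count_eq_length]
        intro b hb
        simp [hsub i b]
      have h2 : v'.count i = v'.length := by
        rw [List.count_eq_length]
        intro b hb
        simp [hsub i b]
      rw [h1, h2, hlen]
      simp
    · intro _
      intro w hw hw0
      exact Stmt15Aux.small_d s (by omega) hupos w hw hw0
  · constructor
    · intro h
      have hone := h (fun _ => (1:ℝ)) (fun i => zero_le_one) (by
        intro hcon
        have h0 : (fun _ => (1:ℝ)) (⟨0, by omega⟩ : Fin d) = 0 := by rw [hcon]; rfl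
        norm_num at h0)
      exact Stmt15Aux.forward_dir hne hprim hd2 hone.1
    · rintro ⟨C, hbal⟩
      exact fun w hw hw0 =>
        Stmt15Aux.backward_dir hne hprim hd2 hunimod hupos heig C hbal w hw hw0
end
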